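/- arXiv:1111.3093 — 6 statements merged into one kernel-verified Lean document; each statement's English description precedes it below -/
import Mathlib

section
/- Let f : ℤ_2 → ℤ_2 be a 1-Lipschitz function (T-function). Then f is bijective modulo 2^k for every k ≥ 1 if and only if each coordinate Boolean function ψ_j of f is linear in its last variable, i.e., for every j ≥ 0 there is a Boolean function φ_j in the variables χ_0, …, χ_{j−1} such that ψ_j(χ_0, …, χ_j) = χ_j ⊕ φ_j(χ_0, …, χ_{j−1}); equivalently, δ_j(f(x + 2^j)) = 1 − δ_j(f(x)) for every x ∈ ℤ_2 and every j ≥ 0. -/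
/-- The map induced by `f : ℤ_[2] → ℤ_[2]` on `ℤ/2^kℤ` (for 1-Lipschitz `f` this is the
well-defined reduction of `f` modulo `2^k`). -/
noncomputable def inducedMod (f : ℤ_[2] → ℤ_[2]) (k : ℕ) : ZMod (2 ^ k) → ZMod (2 ^ k) :=
  fun z => PadicInt.toZModPow k (f ((z.val : ℤ_[2])))

/-- The `j`-th digit of the 2-adic expansion of `x ∈ ℤ_2` (an element of `{0,1} ⊆ ℕ`). -/
noncomputable def digit (j : ℕ) (x : ℤ_[2]) : ℕ :=
  x.appr (j + 1) / 2 ^ j % 2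

namespace Aux

lemma two_cast : ((2 : ℕ) : ℤ_[2]) = 2 := by norm_cast

lemma appr_spec' (k : ℕ) (x : ℤ_[2]) : (2 ^ k : ℤ_[2]) ∣ x - x.appr k := by
  have := PadicInt.appr_spec k x
  rw [Ideal.mem_span_singleton, two_cast] at this
  exact this

lemma mod_eq_of_dvd {k m n : ℕ} (h : (2 ^ k : ℤ_[2]) ∣ ((m : ℤ_[2]) - n)) :
    m % 2 ^ k = n % 2 ^ k := by
  have h2 : ((2 : ℕ) : ℤ_[2]) ^ k ∣ (((m : ℤ) - n : ℤ) : ℤ_[2]) := by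
    rw [two_cast]; push_cast; exact h
  rw [PadicInt.pow_p_dvd_int_iff] at h2
  have h3 : ((2 ^ k : ℕ) : ℤ) ∣ (m : ℤ) - n := by push_cast at h2 ⊢; exact h2
  have h4 : n ≡ m [MOD 2 ^ k] := (Nat.modEq_iff_dvd).mpr h3
  exact h4.symm

lemma appr_eq_of_dvd {k : ℕ} {x y : ℤ_[2]} (h : (2 ^ k : ℤ_[2]) ∣ x - y) :
    x.appr k = y.appr k := by
  have hx := appr_spec' k x
  have hy := appr_spec' k y
  have hd : (2 ^ k : ℤ_[2]) ∣ ((x.appr k : ℤ_[2]) - y.appr k) := by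
    have heq : ((x.appr k : ℤ_[2]) - y.appr k)
        = (x - y) - ((x - x.appr k) - (y - y.appr k)) := by ring
    rw [heq]
    exact dvd_sub h (dvd_sub hx hy)
  have hm := mod_eq_of_dvd hd
  have h1 := PadicInt.appr_lt x k
  have h2 := PadicInt.appr_lt y k
  rwa [Nat.mod_eq_of_lt h1, Nat.mod_eq_of_lt h2] at hm

lemma dvd_of_appr_eq {k : ℕ} {x y : ℤ_[2]} (h : x.appr k = y.appr k) :
    (2 ^ k : ℤ_[2]) ∣ x - y := by
  have hx := appr_spec' k x
  have hy := appr_spec' k y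
  have heq : x - y = (x - x.appr k) - (y - y.appr k) := by rw [h]; ring
  rw [heq]
  exact dvd_sub hx hy

lemma digit_lt (j : ℕ) (x : ℤ_[2]) : digit j x < 2 := Nat.mod_lt _ two_pos

lemma appr_succ (j : ℕ) (x : ℤ_[2]) :
    x.appr (j + 1) = x.appr j + 2 ^ j * digit j x := by
  set a := x.appr (j + 1) with ha
  set b := x.appr j with hb
  have hmod : a % 2 ^ j = b := by
    have h1 : (2 ^ j : ℤ_[2]) ∣ ((a : ℤ_[2]) - b) := by
      have hx1 : (2 ^ j : ℤ_[2]) ∣ x - a :=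
        dvd_trans (pow_dvd_pow 2 (Nat.le_succ j)) (appr_spec' (j + 1) x)
      have hx2 := appr_spec' j x
      have heq : ((a : ℤ_[2]) - b) = (x - b) - (x - a) := by ring
      rw [heq]; exact dvd_sub hx2 hx1
    have := mod_eq_of_dvd h1
    rwa [Nat.mod_eq_of_lt (PadicInt.appr_lt x j)] at this
  have hlt : a < 2 ^ j * 2 := by
    have := PadicInt.appr_lt x (j + 1)
    rwa [pow_succ] at this
  have hq : a / 2 ^ j < 2 := Nat.div_lt_of_lt_mul hlt
  have hdig : digit j x = a / 2 ^ j := Nat.mod_eq_of_lt hq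
  have hda := Nat.div_add_mod a (2 ^ j)
  rw [hdig]
  omega

lemma dvd_succ_iff {j : ℕ} {x y : ℤ_[2]} :
    (2 ^ (j + 1) : ℤ_[2]) ∣ x - y ↔ ((2 ^ j : ℤ_[2]) ∣ x - y ∧ digit j x = digit j y) := by
  constructor
  · intro h
    have hj : (2 ^ j : ℤ_[2]) ∣ x - y := dvd_trans (pow_dvd_pow 2 (Nat.le_succ j)) h
    refine ⟨hj, ?_⟩
    have h1 := appr_eq_of_dvd h
    rw [appr_succ j x, appr_succ j y, appr_eq_of_dvd hj] at h1
    have h2 : 2 ^ j * digit j x = 2 ^ j * digit j y := Nat.add_left_cancel h1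
    exact Nat.eq_of_mul_eq_mul_left (by positivity) h2
  · rintro ⟨hj, hd⟩
    apply dvd_of_appr_eq
    rw [appr_succ, appr_succ, appr_eq_of_dvd hj, hd]

lemma not_dvd_pow {j : ℕ} : ¬ ((2 ^ (j + 1) : ℤ_[2]) ∣ 2 ^ j) := by
  intro h
  have h1 : (2 ^ (j + 1) : ℤ_[2]) ∣ (((2 ^ j : ℕ) : ℤ_[2]) - ((0 : ℕ) : ℤ_[2])) := by
    push_cast
    simpa using h
  have h2 := mod_eq_of_dvd h1
  simp only [Nat.zero_mod] at h2
  have h3 : 2 ^ (j + 1) ∣ 2 ^ j := Nat.dvd_of_mod_eq_zero h2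
  have h4 : 2 ^ (j + 1) ≤ 2 ^ j := Nat.le_of_dvd (by positivity) h3
  have h5 : (2 : ℕ) ^ j < 2 ^ (j + 1) := Nat.pow_lt_pow_right one_lt_two (Nat.lt_succ_self j)
  omega

lemma digit_add_pow (j : ℕ) (x : ℤ_[2]) : digit j (x + 2 ^ j) ≠ digit j x := by
  intro h
  have hj : (2 ^ j : ℤ_[2]) ∣ (x + 2 ^ j) - x := by simp
  have h2 := dvd_succ_iff.mpr ⟨hj, h⟩
  simp only [add_sub_cancel_left] at h2
  exact not_dvd_pow h2

lemma lip {f : ℤ_[2] → ℤ_[2]} (hf : ∀ a b : ℤ_[2], ‖f a - f b‖ ≤ ‖a - b‖)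
    {k : ℕ} {a b : ℤ_[2]} (h : (2 ^ k : ℤ_[2]) ∣ a - b) :
    (2 ^ k : ℤ_[2]) ∣ f a - f b := by
  have key : ∀ z : ℤ_[2], (2 ^ k : ℤ_[2]) ∣ z ↔ ‖z‖ ≤ ((2 : ℕ) : ℝ) ^ (-(k : ℤ)) := by
    intro z
    rw [PadicInt.norm_le_pow_iff_mem_span_pow, Ideal.mem_span_singleton, two_cast]
  rw [key] at h ⊢
  exact le_trans (hf a b) h

lemma toZMod_eq_iff {k : ℕ} {x y : ℤ_[2]} :
    PadicInt.toZModPow k x = PadicInt.toZModPow k y ↔ (2 ^ k : ℤ_[2]) ∣ x - y := by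
  rw [← sub_eq_zero, ← map_sub, ← RingHom.mem_ker, PadicInt.ker_toZModPow,
    Ideal.mem_span_singleton, two_cast]

lemma toZMod_val (k : ℕ) (z : ZMod (2 ^ k)) :
    PadicInt.toZModPow k ((z.val : ℤ_[2])) = z := by
  haveI : NeZero (2 ^ k) := ⟨pow_ne_zero k two_ne_zero⟩
  rw [map_natCast]
  exact ZMod.natCast_rightInverse z

end Aux

open Aux

/-- A 1-Lipschitz function (T-function) `f : ℤ_2 → ℤ_2` is bijective modulo `2^k` for every
`k ≥ 1` if and only if each coordinate Boolean function of `f` is linear in its last variable;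
equivalently, `δ_j(f(x + 2^j)) = 1 - δ_j(f(x))` for every `x ∈ ℤ_2` and every `j ≥ 0`. -/
theorem bijective_mod_iff_coordinate_linear
    (f : ℤ_[2] → ℤ_[2]) (hf : ∀ a b : ℤ_[2], ‖f a - f b‖ ≤ ‖a - b‖) :
    (∀ k : ℕ, 1 ≤ k → Function.Bijective (inducedMod f k)) ↔
      ∀ (x : ℤ_[2]) (j : ℕ), digit j (f (x + 2 ^ j)) = 1 - digit j (f x) := by
  have compat : ∀ (k : ℕ) (x : ℤ_[2]),
      PadicInt.toZModPow k (f x) = inducedMod f k (PadicInt.toZModPow k x) := by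
    intro k x
    unfold inducedMod
    apply toZMod_eq_iff.mpr
    apply lip hf
    apply toZMod_eq_iff.mp
    rw [toZMod_val]
  constructor
  · intro hbij x j
    have hinj := (hbij (j + 1) (Nat.le_add_left 1 j)).injective
    have hxne : ¬ ((2 ^ (j + 1) : ℤ_[2]) ∣ (x + 2 ^ j) - x) := by
      simpa using not_dvd_pow (j := j)
    have hfne : ¬ ((2 ^ (j + 1) : ℤ_[2]) ∣ f (x + 2 ^ j) - f x) := by
      intro h
      apply hxne
      rw [← toZMod_eq_iff] at h ⊢
      rw [compat, compat] at h
      exact hinj h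
    have hfj : (2 ^ j : ℤ_[2]) ∣ f (x + 2 ^ j) - f x := by
      apply lip hf; simp
    have hne : digit j (f (x + 2 ^ j)) ≠ digit j (f x) := by
      intro h
      exact hfne (dvd_succ_iff.mpr ⟨hfj, h⟩)
    have d1 := digit_lt j (f (x + 2 ^ j))
    have d2 := digit_lt j (f x)
    omega
  · intro H k hk
    have key : ∀ (k : ℕ) (x y : ℤ_[2]),
        (2 ^ k : ℤ_[2]) ∣ f x - f y → (2 ^ k : ℤ_[2]) ∣ x - y := by
      intro k
      induction k with
      | zero => intro x y _; simp
      | succ k ih =>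
        intro x y h
        have hk' : (2 ^ k : ℤ_[2]) ∣ x - y :=
          ih x y (dvd_trans (pow_dvd_pow 2 (Nat.le_succ k)) h)
        have hdf : digit k (f x) = digit k (f y) := (dvd_succ_iff.mp h).2
        rw [dvd_succ_iff]
        refine ⟨hk', ?_⟩
        by_contra hne
        have hdig : digit k y = digit k (x + 2 ^ k) := by
          have h1 := digit_add_pow k x
          have d1 := digit_lt k y
          have d2 := digit_lt k x
          have d3 := digit_lt k (x + 2 ^ k)
          omega
        have hdvd : (2 ^ (k + 1) : ℤ_[2]) ∣ y - (x + 2 ^ k) := by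
          apply dvd_succ_iff.mpr
          constructor
          · have heq : y - (x + 2 ^ k) = (x - y) * (-1) + 2 ^ k * (-1) := by ring
            rw [heq]
            exact dvd_add (Dvd.dvd.mul_right hk' _) (Dvd.dvd.mul_right (dvd_refl _) _)
          · exact hdig
        have hfdvd : (2 ^ (k + 1) : ℤ_[2]) ∣ f y - f (x + 2 ^ k) := lip hf hdvd
        have h1 : digit k (f y) = digit k (f (x + 2 ^ k)) := (dvd_succ_iff.mp hfdvd).2
        have h2 := H x k
        have d1 := digit_lt k (f x)
        omega
    haveI : NeZero (2 ^ k) := ⟨pow_ne_zero k two_ne_zero⟩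
    rw [← Finite.injective_iff_bijective]
    intro z1 z2 hz
    unfold inducedMod at hz
    have h1 := key k _ _ (toZMod_eq_iff.mp hz)
    have h2 := toZMod_eq_iff.mpr h1
    rwa [toZMod_val, toZMod_val] at h2
end

section
/- Let f : ℤ_2 → ℤ_2 be a 1-Lipschitz function (T-function). Then f is transitive modulo 2^k for every k ≥ 1 if and only if f is bijective modulo 2^k for every k ≥ 1 (equivalently, each coordinate function satisfies ψ_j(χ_0, …, χ_j) = χ_j ⊕ φ_j(χ_0, …, χ_{j−1})) and, in addition, every Boolean function φ_j has odd weight; concretely, the latter means that for every j ≥ 0 the number of integers x ∈ {0, 1, …, 2^j − 1} such that δ_j(f(x)) = 1 is odd. -/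
set_option linter.unusedSectionVars false
set_option linter.unusedTactic false
set_option linter.unreachableTactic false

lemma orbit_mp {α : Type*} [Fintype α] [DecidableEq α] (g : α → α) (hb : Function.Bijective g)
    (x : α) (hs : ∀ z, ∃ n, g^[n] x = z) : Function.minimalPeriod g x = Fintype.card α := by
  -- x is periodic
  have hper : x ∈ Function.periodicPts g := by
    have hpig : ∃ a ∈ Finset.range (Fintype.card α + 1), ∃ b ∈ Finset.range (Fintype.card α + 1),
        a ≠ b ∧ g^[a] x = g^[b] x := by
      have := Finset.exists_ne_map_eq_of_card_lt_of_maps_to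
        (s := Finset.range (Fintype.card α + 1)) (t := Finset.univ)
        (by simp) (fun a _ => Finset.mem_univ (g^[a] x))
      obtain ⟨a, ha, b, hb', hne, he⟩ := this
      exact ⟨a, ha, b, hb', hne, he⟩
    obtain ⟨a, _, b, _, hne, he⟩ := hpig
    rcases Nat.lt_or_ge a b with hab | hab
    · refine Function.mk_mem_periodicPts (n := b - a) (by omega) ?_
      have hinj : Function.Injective (g^[a]) := hb.injective.iterate a
      apply hinj
      rw [← Function.iterate_add_apply]
      rw [show a + (b - a) = b by omega]
      exact he.symm
    · have hab' : b < a := by omega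
      refine Function.mk_mem_periodicPts (n := a - b) (by omega) ?_
      have hinj : Function.Injective (g^[b]) := hb.injective.iterate b
      apply hinj
      rw [← Function.iterate_add_apply]
      rw [show b + (a - b) = a by omega]
      exact he
  have hdpos : 0 < Function.minimalPeriod g x :=
    Function.minimalPeriod_pos_of_mem_periodicPts hper
  set d := Function.minimalPeriod g x with hd
  have hinjOn : ∀ a ∈ Finset.range d, ∀ b ∈ Finset.range d,
      g^[a] x = g^[b] x → a = b := by
    intro a ha b hb' he
    exact Function.iterate_injOn_Iio_minimalPeriod
      (Finset.mem_range.mp ha) (Finset.mem_range.mp hb') he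
  have hle : d ≤ Fintype.card α := by
    have := Finset.card_le_card_of_injOn (fun m => g^[m] x)
      (fun a _ => Finset.mem_univ _) (fun a ha b hb' he => hinjOn a ha b hb' he)
    simpa using this
  have hge : Fintype.card α ≤ d := by
    have himg : Finset.univ ⊆ (Finset.range d).image (fun m => g^[m] x) := by
      intro z _
      obtain ⟨n, hn⟩ := hs z
      refine Finset.mem_image.mpr ⟨n % d, Finset.mem_range.mpr (Nat.mod_lt _ hdpos), ?_⟩
      rw [Function.iterate_mod_minimalPeriod_eq]; exact hn
    calc Fintype.card α = Finset.univ.card := (Finset.card_univ).symm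
      _ ≤ ((Finset.range d).image (fun m => g^[m] x)).card := Finset.card_le_card himg
      _ ≤ (Finset.range d).card := Finset.card_image_le
      _ = d := Finset.card_range d
  omega

lemma orbit_mpr {α : Type*} [Fintype α] [DecidableEq α] (g : α → α) (x : α)
    (h : Function.minimalPeriod g x = Fintype.card α) : ∀ z, ∃ n, g^[n] x = z := by
  intro z
  have himg : (Finset.range (Fintype.card α)).image (fun m => g^[m] x) = Finset.univ := by
    apply Finset.eq_univ_of_card
    rw [Finset.card_image_of_injOn, Finset.card_range]
    intro a ha b hb he
    exact Function.iterate_injOn_Iio_minimalPeriod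
      (h ▸ Finset.mem_range.mp (Finset.mem_coe.mp ha))
      (h ▸ Finset.mem_range.mp (Finset.mem_coe.mp hb)) he
  have := himg ▸ Finset.mem_univ z
  obtain ⟨n, _, hn⟩ := Finset.mem_image.mp this
  exact ⟨n, hn⟩

namespace Anashin

instance nz (k : ℕ) : NeZero (2 ^ k) := ⟨pow_ne_zero _ two_ne_zero⟩

lemma val_toZModPow (n : ℕ) (x : ℤ_[2]) : (PadicInt.toZModPow n x).val = x.appr n := by
  show ((x.appr n : ℕ) : ZMod (2^n)).val = x.appr n
  rw [ZMod.val_natCast, Nat.mod_eq_of_lt (PadicInt.appr_lt x n)]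

lemma digit_lt_two (j : ℕ) (x : ℤ_[2]) : digit j x < 2 := Nat.mod_lt _ two_pos

noncomputable def pr (k : ℕ) : ZMod (2^(k+1)) →+* ZMod (2^k) :=
  ZMod.castHom (pow_dvd_pow 2 (Nat.le_succ k)) _

lemma pr_val (k : ℕ) (x : ZMod (2^(k+1))) : (pr k x).val = x.val % 2^k := by
  show ((ZMod.castHom _ (ZMod (2^k))) x).val = _
  rw [ZMod.castHom_apply, ← ZMod.natCast_val, ZMod.val_natCast]

lemma pr_zero_iff (k : ℕ) (x : ZMod (2^(k+1))) :
    pr k x = 0 ↔ x = 0 ∨ x = ((2^k : ℕ) : ZMod (2^(k+1))) := by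
  have hlt : x.val < 2^(k+1) := ZMod.val_lt x
  have h2 : (2:ℕ)^(k+1) = 2^k * 2 := by rw [pow_succ]
  have hvt : (((2^k:ℕ) : ZMod (2^(k+1)))).val = 2^k := by
    rw [ZMod.val_natCast, Nat.mod_eq_of_lt]; rw [h2]; nlinarith [Nat.pow_pos (n := k) (show 0 < 2 by norm_num)]
  constructor
  · intro h
    have := pr_val k x
    rw [h, ZMod.val_zero] at this
    have hdvd : 2^k ∣ x.val := Nat.dvd_of_mod_eq_zero this.symm
    obtain ⟨c, hc⟩ := hdvd
    have hc2 : c < 2 := by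
      by_contra hcc
      push_neg at hcc
      rw [hc, h2] at hlt
      exact absurd (Nat.mul_lt_mul_left (Nat.pow_pos (n := k) (by norm_num)) |>.mp hlt) (by omega)
    interval_cases c
    · left; rw [← ZMod.val_eq_zero]; omega
    · right
      have : x.val = (((2^k:ℕ) : ZMod (2^(k+1)))).val := by omega
      exact ZMod.val_injective _ this
  · rintro (rfl | rfl)
    · exact map_zero _
    · rw [← ZMod.val_eq_zero, pr_val, hvt, Nat.mod_self]

lemma hvt (k : ℕ) : (((2^k:ℕ) : ZMod (2^(k+1)))).val = 2^k := by
  rw [ZMod.val_natCast, Nat.mod_eq_of_lt]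
  have := Nat.pow_pos (n := k) (show 0 < 2 by norm_num)
  rw [pow_succ]; omega
lemma t_ne_zero (k : ℕ) : ((2^k : ℕ) : ZMod (2^(k+1))) ≠ 0 := by
  intro h
  have := hvt k
  rw [h, ZMod.val_zero] at this
  exact absurd this.symm (Nat.pow_pos (n := k) (by norm_num)).ne'
variable (f : ℤ_[2] → ℤ_[2])

lemma wd (hf : ∀ a b : ℤ_[2], ‖f a - f b‖ ≤ ‖a - b‖) (k : ℕ) (a b : ℤ_[2])
    (h : a - b ∈ Ideal.span {(2:ℤ_[2])^k}) :
    PadicInt.toZModPow k (f a) = PadicInt.toZModPow k (f b) := by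
  have e : ((2:ℕ):ℤ_[2]) = 2 := by norm_cast
  have h1 : f a - f b ∈ Ideal.span {((2:ℕ):ℤ_[2])^k} := by
    rw [← PadicInt.norm_le_pow_iff_mem_span_pow]
    refine le_trans (hf a b) ?_
    rw [PadicInt.norm_le_pow_iff_mem_span_pow]
    rwa [e]
  rw [e] at h1
  have h2 := (PadicInt.ker_toZModPow (p := 2) k).symm ▸ h1
  rw [RingHom.mem_ker, map_sub, sub_eq_zero] at h2
  exact h2

lemma natsub (k : ℕ) (a b : ℕ) (h : a % 2^k = b % 2^k) :
    ((a : ℤ_[2]) - b) ∈ Ideal.span {(2:ℤ_[2])^k} := by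
  rw [Ideal.mem_span_singleton]
  have hm : a ≡ b [MOD 2^k] := h
  have hd : ((2^k : ℕ) : ℤ) ∣ (b:ℤ) - a := hm.dvd
  obtain ⟨c, hc⟩ := hd
  have : ((a:ℤ) : ℤ_[2]) - ((b:ℤ) : ℤ_[2]) = (2:ℤ_[2])^k * (-c : ℤ) := by
    have : (a:ℤ) - b = (2:ℤ)^k * (-c) := by push_cast at hc ⊢; linarith
    calc ((a:ℤ) : ℤ_[2]) - ((b:ℤ) : ℤ_[2]) = (((a:ℤ) - b : ℤ) : ℤ_[2]) := by push_cast; ring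
    _ = (((2:ℤ)^k * (-c) : ℤ) : ℤ_[2]) := by rw [this]
    _ = (2:ℤ_[2])^k * (-c : ℤ) := by push_cast; ring
  exact ⟨(-c : ℤ), by push_cast at this ⊢; convert this using 2 <;> norm_cast⟩

variable (hf : ∀ a b : ℤ_[2], ‖f a - f b‖ ≤ ‖a - b‖)
include hf

lemma compat (k : ℕ) (x : ZMod (2^(k+1))) :
    pr k (inducedMod f (k+1) x) = inducedMod f k (pr k x) := by
  show pr k (PadicInt.toZModPow (k+1) (f (x.val : ℤ_[2]))) = PadicInt.toZModPow k (f ((pr k x).val : ℤ_[2]))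
  have h1 : pr k (PadicInt.toZModPow (k+1) (f (x.val : ℤ_[2]))) = PadicInt.toZModPow k (f (x.val : ℤ_[2])) := by
    show (ZMod.castHom _ (ZMod (2^k))) _ = _
    rw [ZMod.castHom_apply, PadicInt.cast_toZModPow k (k+1) (Nat.le_succ k)]
  rw [h1]
  apply wd f hf
  apply natsub
  rw [pr_val]; exact (Nat.mod_mod_of_dvd _ dvd_rfl).symm

lemma compat_iter (k n : ℕ) (x : ZMod (2^(k+1))) :
    pr k ((inducedMod f (k+1))^[n] x) = (inducedMod f k)^[n] (pr k x) := by
  induction n with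
  | zero => rfl
  | succ n ih => rw [Function.iterate_succ_apply', Function.iterate_succ_apply', compat f hf, ih]

lemma stepA (k : ℕ) (hinj : Function.Injective (inducedMod f (k+1))) (x : ZMod (2^(k+1))) :
    inducedMod f (k+1) (x + ((2^k:ℕ) : ZMod (2^(k+1)))) =
      inducedMod f (k+1) x + ((2^k:ℕ) : ZMod (2^(k+1))) := by
  have hprt : pr k ((2^k:ℕ) : ZMod (2^(k+1))) = 0 := by
    rw [← ZMod.val_eq_zero, pr_val, hvt, Nat.mod_self]
  have hd : pr k (inducedMod f (k+1) (x + ((2^k:ℕ) : ZMod (2^(k+1)))) - inducedMod f (k+1) x) = 0 := by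
    rw [map_sub, compat f hf, compat f hf, map_add, hprt, add_zero, sub_self]
  rcases (pr_zero_iff k _).mp hd with h | h
  · exfalso
    rw [sub_eq_zero] at h
    have h2 := hinj h
    have ht0 : ((2^k:ℕ) : ZMod (2^(k+1))) = (0 : ZMod (2^(k+1))) := by
      have h3 : x + ((2^k:ℕ) : ZMod (2^(k+1))) = x + 0 := by rw [add_zero]; exact h2
      exact add_left_cancel h3
    exact t_ne_zero k ht0
  · rw [sub_eq_iff_eq_add] at h
    rw [h]; ring

lemma stepA_iter (k : ℕ) (hinj : Function.Injective (inducedMod f (k+1))) (n : ℕ)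
    (x : ZMod (2^(k+1))) :
    (inducedMod f (k+1))^[n] (x + ((2^k:ℕ) : ZMod (2^(k+1)))) =
      (inducedMod f (k+1))^[n] x + ((2^k:ℕ) : ZMod (2^(k+1))) := by
  induction n generalizing x with
  | zero => rfl
  | succ n ih => rw [Function.iterate_succ_apply, Function.iterate_succ_apply,
      stepA f hf k hinj, ih]

omit hf in
lemma topbit_add (k : ℕ) (z : ZMod (2^(k+1))) :
    ((z + ((2^k:ℕ) : ZMod (2^(k+1)))).val / 2^k) % 2 = (z.val / 2^k + 1) % 2 := by
  have hN : 0 < 2^k := Nat.pow_pos (n := k) (by norm_num)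
  have h2 : (2:ℕ)^(k+1) = 2^k * 2 := pow_succ 2 k
  have hlt : z.val < 2^(k+1) := ZMod.val_lt z
  rw [ZMod.val_add, hvt]
  rcases lt_or_ge z.val (2^k) with h | h
  · have e0 : (z.val + 2^k) % 2^(k+1) = z.val + 2^k := Nat.mod_eq_of_lt (by omega)
    have e1 : (z.val + 2^k) / 2^k = 1 := Nat.div_eq_of_lt_le (by omega) (by omega)
    have e2 : z.val / 2^k = 0 := Nat.div_eq_of_lt h
    rw [e0, e1, e2]
  · have e1 : (z.val + 2^k) % 2^(k+1) = z.val - 2^k := by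
      rw [Nat.mod_eq_sub_mod (by omega)]
      have e : z.val + 2^k - 2^(k+1) = z.val - 2^k := by omega
      rw [e, Nat.mod_eq_of_lt (by omega)]
    have e2 : (z.val - 2^k) / 2^k = 0 := Nat.div_eq_of_lt (by omega)
    have e3 : z.val / 2^k = 1 := Nat.div_eq_of_lt_le (by omega) (by omega)
    rw [e1, e2, e3]

lemma step (k : ℕ) (hinj : Function.Injective (inducedMod f (k+1))) (x : ZMod (2^(k+1))) :
    (inducedMod f (k+1) x).val / 2^k % 2
      = (digit k (f ((x.val % 2^k : ℕ) : ℤ_[2])) + x.val / 2^k) % 2 := by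
  have hN : 0 < 2^k := Nat.pow_pos (n := k) (by norm_num)
  have h2 : (2:ℕ)^(k+1) = 2^k * 2 := pow_succ 2 k
  have hlt : x.val < 2^(k+1) := ZMod.val_lt x
  set r := x.val % 2^k with hr
  set x₀ : ZMod (2^(k+1)) := ((r:ℕ) : ZMod (2^(k+1))) with hx₀
  have hx₀v : x₀.val = r := by
    rw [hx₀, ZMod.val_natCast, Nat.mod_eq_of_lt (by have := Nat.mod_lt x.val hN; omega)]
  have key : (inducedMod f (k+1) x₀).val / 2^k % 2 = digit k (f ((r:ℕ) : ℤ_[2])) := by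
    show (PadicInt.toZModPow (k+1) (f ((x₀.val : ℕ) : ℤ_[2]))).val / 2^k % 2 = _
    rw [hx₀v, val_toZModPow]
    rfl
  rcases Nat.lt_or_ge x.val (2^k) with h | h
  · have hx : x = x₀ := by
      have : x.val = x₀.val := by rw [hx₀v, hr, Nat.mod_eq_of_lt h]
      exact ZMod.val_injective _ this
    have hdiv : x.val / 2^k = 0 := Nat.div_eq_of_lt h
    have hdig : digit k (f ((r:ℕ) : ℤ_[2])) < 2 := Nat.mod_lt _ (by norm_num)
    rw [hdiv, hx, key]
    omega
  · have hdiv : x.val / 2^k = 1 := Nat.div_eq_of_lt_le (by omega) (by omega)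
    have hveq : x.val = r + 2^k := by
      have hm := Nat.mod_add_div x.val (2^k)
      rw [hdiv] at hm
      omega
    have hx : x = x₀ + ((2^k:ℕ) : ZMod (2^(k+1))) := by
      have hv : (x₀ + ((2^k:ℕ) : ZMod (2^(k+1)))).val = r + 2^k := by
        rw [ZMod.val_add, hx₀v, hvt, Nat.mod_eq_of_lt (by have := Nat.mod_lt x.val hN; omega)]
      have h9 : x.val = (x₀ + ((2^k:ℕ) : ZMod (2^(k+1)))).val := by rw [hv]; exact hveq
      exact ZMod.val_injective _ h9
    rw [hdiv, hx, stepA f hf k hinj, topbit_add]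
    have hdig : digit k (f ((r:ℕ) : ℤ_[2])) < 2 := Nat.mod_lt _ (by norm_num)
    set a := (inducedMod f (k+1) x₀).val / 2^k with ha
    clear_value a
    omega

lemma iter_sum (k : ℕ) (hinj : Function.Injective (inducedMod f (k+1))) (n : ℕ) :
    ((inducedMod f (k+1))^[n] 0).val / 2^k % 2
      = (∑ m ∈ Finset.range n, digit k (f ((((inducedMod f k)^[m] 0).val : ℕ) : ℤ_[2]))) % 2 := by
  induction n with
  | zero => simp
  | succ n ih =>
    rw [Function.iterate_succ_apply', step f hf k hinj, Finset.sum_range_succ]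
    have hproj : ((inducedMod f (k+1))^[n] 0).val % 2^k = ((inducedMod f k)^[n] 0).val := by
      rw [← pr_val, compat_iter f hf, map_zero]
    rw [hproj]
    omega

end Anashin

namespace Anashin
variable (f : ℤ_[2] → ℤ_[2]) (hf : ∀ a b : ℤ_[2], ‖f a - f b‖ ≤ ‖a - b‖)
include hf

/-- Transitivity of the induced map modulo `2^k`. -/
def T (k : ℕ) : Prop := ∀ z : ZMod (2^k), ∃ n : ℕ, (inducedMod f k)^[n] 0 = z

omit hf in
lemma card_zmod (k : ℕ) : Fintype.card (ZMod (2^k)) = 2^k := ZMod.card _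

lemma trans_down (k : ℕ) (h : T f (k+1)) : T f k := by
  intro z
  obtain ⟨n, hn⟩ := h ((z.val : ZMod (2^(k+1))))
  refine ⟨n, ?_⟩
  have h0 : pr k (0 : ZMod (2^(k+1))) = 0 := map_zero _
  have hz : pr k ((z.val : ZMod (2^(k+1)))) = z := by
    apply ZMod.val_injective
    rw [pr_val, ZMod.val_natCast,
      Nat.mod_eq_of_lt (lt_of_lt_of_le (ZMod.val_lt z) (Nat.pow_le_pow_right (by norm_num) (Nat.le_succ k))),
      Nat.mod_eq_of_lt (ZMod.val_lt z)]
  calc (inducedMod f k)^[n] 0 = (inducedMod f k)^[n] (pr k 0) := by rw [h0]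
    _ = pr k ((inducedMod f (k+1))^[n] 0) := (compat_iter f hf k n 0).symm
    _ = pr k ((z.val : ZMod (2^(k+1)))) := by rw [hn]
    _ = z := hz

lemma bij_of_trans (k : ℕ) (h : T f (k+1)) : Function.Bijective (inducedMod f k) := by
  have h0 : ∃ y, inducedMod f k y = 0 := by
    obtain ⟨n, hn⟩ := h (((2^k:ℕ) : ZMod (2^(k+1))))
    have hn0 : n ≠ 0 := by
      intro h'
      rw [h'] at hn
      exact t_ne_zero k hn.symm
    obtain ⟨m, rfl⟩ := Nat.exists_eq_succ_of_ne_zero hn0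
    refine ⟨(inducedMod f k)^[m] 0, ?_⟩
    have : pr k ((inducedMod f (k+1))^[m+1] 0) = (inducedMod f k)^[m+1] (pr k 0) :=
      compat_iter f hf k (m+1) 0
    rw [hn, map_zero] at this
    have ht : pr k (((2^k:ℕ) : ZMod (2^(k+1)))) = 0 := by
      rw [← ZMod.val_eq_zero, pr_val, hvt, Nat.mod_self]
    rw [ht] at this
    rw [Function.iterate_succ_apply'] at this
    exact this.symm
  have hsurj : Function.Surjective (inducedMod f k) := by
    intro z
    obtain ⟨n, hn⟩ := trans_down f hf k h z
    cases n with
    | zero =>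
      obtain ⟨y, hy⟩ := h0
      exact ⟨y, by rw [hy, ← hn]; rfl⟩
    | succ m =>
      rw [Function.iterate_succ_apply'] at hn
      exact ⟨(inducedMod f k)^[m] 0, hn⟩
  exact ⟨(Finite.injective_iff_surjective).mpr hsurj, hsurj⟩

lemma mp_eq (k : ℕ) (hb : Function.Bijective (inducedMod f k)) (ht : T f k) :
    Function.minimalPeriod (inducedMod f k) 0 = 2^k := by
  rw [orbit_mp (inducedMod f k) hb 0 ht, card_zmod]

lemma crux (k : ℕ) (hb1 : Function.Bijective (inducedMod f k))
    (hb2 : Function.Bijective (inducedMod f (k+1)))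
    (hmp : Function.minimalPeriod (inducedMod f k) 0 = 2^k) :
    T f (k+1) ↔
      Odd ((Finset.range (2 ^ k)).filter (fun (x : ℕ) => digit k (f ((x : ℕ) : ℤ_[2])) = 1)).card := by
  have hN : 0 < 2^k := Nat.pow_pos (n := k) (by norm_num)
  set g := inducedMod f (k+1) with hg
  set gk := inducedMod f k with hgk
  set A := g^[2^k] 0 with hA
  -- projection of A is 0
  have h00 : gk^[2^k] 0 = 0 := by
    have h0 := Function.iterate_minimalPeriod (f := gk) (x := (0 : ZMod (2^k)))
    rwa [hmp] at h0
  have hproj : pr k A = 0 := by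
    rw [hA, compat_iter f hf, map_zero]
    exact h00
  have hcases := (pr_zero_iff k A).mp hproj
  -- the sum identity
  have hsum : A.val / 2^k % 2
      = (∑ m ∈ Finset.range (2^k), digit k (f (((gk^[m] 0).val : ℕ) : ℤ_[2]))) % 2 :=
    iter_sum f hf k hb2.injective (2^k)
  -- reindex the sum to the filter cardinality
  have hreidx : (∑ m ∈ Finset.range (2^k), digit k (f (((gk^[m] 0).val : ℕ) : ℤ_[2])))
      = ((Finset.range (2 ^ k)).filter (fun (x : ℕ) => digit k (f ((x : ℕ) : ℤ_[2])) = 1)).card := by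
    have hio : ∀ a ∈ Finset.range (2^k), ∀ b ∈ Finset.range (2^k),
        gk^[a] 0 = gk^[b] 0 → a = b := by
      intro a ha b hb he
      have ha' := Finset.mem_range.mp ha
      have hb' := Finset.mem_range.mp hb
      rw [← hmp] at ha' hb'
      exact Function.iterate_injOn_Iio_minimalPeriod ha' hb' he
    have himg : (Finset.range (2^k)).image (fun m => gk^[m] 0) = Finset.univ := by
      apply Finset.eq_univ_of_card
      rw [Finset.card_image_of_injOn (fun a ha b hb he => hio a ha b hb he),
        Finset.card_range, card_zmod]
    have e1 : (∑ m ∈ Finset.range (2^k), digit k (f (((gk^[m] 0).val : ℕ) : ℤ_[2])))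
        = ∑ y : ZMod (2^k), digit k (f ((y.val : ℕ) : ℤ_[2])) := by
      rw [← himg, Finset.sum_image hio]
    have hio2 : ∀ a ∈ Finset.range (2^k), ∀ b ∈ Finset.range (2^k),
        ((a : ZMod (2^k)) = (b : ZMod (2^k))) → a = b := by
      intro a ha b hb he
      have := congrArg ZMod.val he
      rwa [ZMod.val_natCast, ZMod.val_natCast, Nat.mod_eq_of_lt (Finset.mem_range.mp ha),
        Nat.mod_eq_of_lt (Finset.mem_range.mp hb)] at this
    have himg2 : (Finset.range (2^k)).image (fun (m : ℕ) => ((m : ZMod (2^k)))) = Finset.univ := by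
      apply Finset.eq_univ_of_card
      rw [Finset.card_image_of_injOn (fun a ha b hb he => hio2 a ha b hb he),
        Finset.card_range, card_zmod]
    have e2 : (∑ y : ZMod (2^k), digit k (f ((y.val : ℕ) : ℤ_[2])))
        = ∑ x ∈ Finset.range (2^k), digit k (f ((x : ℕ) : ℤ_[2])) := by
      rw [← himg2, Finset.sum_image hio2]
      apply Finset.sum_congr rfl
      intro x hx
      rw [ZMod.val_natCast, Nat.mod_eq_of_lt (Finset.mem_range.mp hx)]
    rw [e1, e2, Finset.card_filter]
    apply Finset.sum_congr rfl
    intro x _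
    have := digit_lt_two k (f ((x : ℕ) : ℤ_[2]))
    split
    · omega
    · omega
  rw [hreidx] at hsum
  constructor
  · intro hT
    have hmp2 : Function.minimalPeriod g 0 = 2^(k+1) := by
      rw [orbit_mp g hb2 0 hT, card_zmod]
    have hAne : A ≠ 0 := by
      intro h0
      have hper : Function.IsPeriodicPt g (2^k) 0 := h0
      have := hper.minimalPeriod_le hN
      rw [hmp2] at this
      have : (2:ℕ)^(k+1) = 2^k*2 := pow_succ 2 k
      omega
    have hAt : A = ((2^k:ℕ) : ZMod (2^(k+1))) := by tauto
    have : A.val / 2^k % 2 = 1 := by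
      rw [hAt, hvt, Nat.div_self hN]
    rw [this] at hsum
    exact Nat.odd_iff.mpr hsum.symm
  · intro hodd
    have hcard := Nat.odd_iff.mp hodd
    rw [hcard] at hsum
    have hAne : A ≠ 0 := by
      intro h0
      rw [h0] at hsum
      simp at hsum
    have hAt : A = ((2^k:ℕ) : ZMod (2^(k+1))) := by tauto
    have hper : Function.IsPeriodicPt g (2^(k+1)) 0 := by
      show g^[2^(k+1)] 0 = 0
      have hcount : (2:ℕ)^(k+1) = 2^k + 2^k := by rw [pow_succ]; omega
      have e5 : ((2^k:ℕ) : ZMod (2^(k+1))) + ((2^k:ℕ) : ZMod (2^(k+1))) = 0 := by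
        rw [← Nat.cast_add, show (2:ℕ)^k + 2^k = 2^(k+1) by rw [pow_succ]; omega,
          ZMod.natCast_self]
      have e4 : g^[2^k] (((2^k:ℕ) : ZMod (2^(k+1)))) = 0 := by
        have h5 := stepA_iter f hf k hb2.injective (2^k) 0
        rw [zero_add] at h5
        rw [h5, ← hA, hAt, e5]
      calc g^[2^(k+1)] 0 = g^[2^k + 2^k] 0 :=
            congrArg (fun n => g^[n] (0 : ZMod (2^(k+1)))) hcount
        _ = g^[2^k] (g^[2^k] 0) := Function.iterate_add_apply g _ _ 0
        _ = g^[2^k] (((2^k:ℕ) : ZMod (2^(k+1)))) := by rw [← hA, hAt]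
        _ = 0 := e4
    have hdvd := hper.minimalPeriod_dvd
    obtain ⟨i, hi, hd⟩ := (Nat.dvd_prime_pow Nat.prime_two).mp hdvd
    have hik : i = k + 1 := by
      by_contra hne
      have hik : i ≤ k := by omega
      have : Function.minimalPeriod g 0 ∣ 2^k := hd ▸ pow_dvd_pow 2 hik
      have hper2 : Function.IsPeriodicPt g (2^k) 0 :=
        Function.isPeriodicPt_iff_minimalPeriod_dvd.mpr this
      have : A = 0 := hper2
      exact hAne this
    have hmpeq : Function.minimalPeriod g 0 = Fintype.card (ZMod (2^(k+1))) := by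
      rw [hd, hik, card_zmod]
    exact orbit_mpr g 0 hmpeq

end Anashin

namespace Anashin
variable (f : ℤ_[2] → ℤ_[2])

lemma T0 : T f 0 := by
  intro z
  haveI : Subsingleton (ZMod (2^0)) := inferInstanceAs (Subsingleton (ZMod 1))
  exact ⟨0, Subsingleton.elim _ _⟩

lemma bij0 : Function.Bijective (inducedMod f 0) := by
  haveI : Subsingleton (ZMod (2^0)) := inferInstanceAs (Subsingleton (ZMod 1))
  exact ⟨fun a b _ => Subsingleton.elim a b, fun z => ⟨z, Subsingleton.elim _ _⟩⟩

end Anashin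

/-- A 1-Lipschitz function (T-function) `f : ℤ_2 → ℤ_2` is transitive modulo `2^k` for every
`k ≥ 1` (orbit of `0` under the induced map is all of `ℤ/2^kℤ`) if and only if `f` is bijective
modulo `2^k` for every `k ≥ 1` and, in addition, for every `j ≥ 0` the number of integers
`x ∈ {0,…,2^j − 1}` with `δ_j(f(x)) = 1` is odd (i.e. each `φ_j` has odd weight). -/
theorem transitive_mod_iff_bijective_and_odd_weight
    (f : ℤ_[2] → ℤ_[2]) (hf : ∀ a b : ℤ_[2], ‖f a - f b‖ ≤ ‖a - b‖) :
    (∀ k : ℕ, 1 ≤ k → ∀ z : ZMod (2 ^ k), ∃ n : ℕ, (inducedMod f k)^[n] 0 = z) ↔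
      ((∀ k : ℕ, 1 ≤ k → Function.Bijective (inducedMod f k)) ∧
        ∀ j : ℕ,
          Odd ((Finset.range (2 ^ j)).filter (fun (x : ℕ) => digit j (f ((x : ℕ) : ℤ_[2])) = 1)).card) := by
  constructor
  · intro H
    have HT : ∀ k, Anashin.T f k := by
      intro k
      cases k with
      | zero => exact Anashin.T0 f
      | succ k => exact H (k+1) (by omega)
    have HB : ∀ k, Function.Bijective (inducedMod f k) :=
      fun k => Anashin.bij_of_trans f hf k (HT (k+1))
    refine ⟨fun k _ => HB k, fun j => ?_⟩
    exact (Anashin.crux f hf j (HB j) (HB (j+1))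
      (Anashin.mp_eq f hf j (HB j) (HT j))).mp (HT (j+1))
  · rintro ⟨HB', Hodd⟩
    have HB : ∀ k, Function.Bijective (inducedMod f k) := by
      intro k
      cases k with
      | zero => exact Anashin.bij0 f
      | succ k => exact HB' (k+1) (by omega)
    have HT : ∀ k, Anashin.T f k := by
      intro k
      induction k with
      | zero => exact Anashin.T0 f
      | succ k ih =>
        exact (Anashin.crux f hf k (HB k) (HB (k+1))
          (Anashin.mp_eq f hf k (HB k) ih)).mpr (Hodd k)
    intro k _ z
    exact HT k z
end

section
/- Let n ≥ 1 and let F : ℤ_2^{n+1} → ℤ_2 be 1-Lipschitz with respect to the maximum 2-adic metric, and suppose that for every fixed z = (z_1, …, z_n) ∈ ℤ_2^n the univariate function x ↦ F(x, z_1, …, z_n) is bijective modulo 2^k for every k ≥ 1. Then for every 1-Lipschitz function f : ℤ_2 → ℤ_2 that is bijective modulo 2^k for every k ≥ 1 and arbitrary 1-Lipschitz functions g_1, …, g_n : ℤ_2 → ℤ_2, the composition x ↦ F(f(x), 2·g_1(x), …, 2·g_n(x)) is bijective modulo 2^k for every k ≥ 1. -/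
lemma cong_iff (k : ℕ) (a b : ℤ_[2]) :
    PadicInt.toZModPow k a = PadicInt.toZModPow k b ↔ ‖a - b‖ ≤ (2:ℝ) ^ (-(k:ℤ)) := by
  rw [← sub_eq_zero, ← map_sub, ← RingHom.mem_ker, PadicInt.ker_toZModPow,
    ← PadicInt.norm_le_pow_iff_mem_span_pow]
  norm_num

lemma val_cast_eq (k : ℕ) (z : ZMod (2 ^ k)) :
    PadicInt.toZModPow k ((z.val : ℤ_[2])) = z := by
  rw [map_natCast, ZMod.natCast_val, ZMod.cast_id]

lemma lt_to_le (x : ℤ_[2]) (m : ℕ) (h : ‖x‖ < (2:ℝ) ^ (-(m:ℤ))) :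
    ‖x‖ ≤ (2:ℝ) ^ (-((m+1:ℕ):ℤ)) := by
  have h' : ‖x‖ < ((2:ℕ):ℝ) ^ (-(m:ℤ)) := by exact_mod_cast h
  have := (PadicInt.norm_lt_pow_iff_norm_le_pow_sub_one x (-(m:ℤ))).mp h'
  have e : (-(m:ℤ) - 1) = (-((m+1:ℕ):ℤ)) := by push_cast; ring
  rw [e] at this
  exact_mod_cast this

lemma induced_apply (f : ℤ_[2] → ℤ_[2]) (hf : ∀ a b : ℤ_[2], ‖f a - f b‖ ≤ ‖a - b‖)
    (k : ℕ) (a : ℤ_[2]) :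
    inducedMod f k (PadicInt.toZModPow k a) = PadicInt.toZModPow k (f a) := by
  unfold inducedMod
  refine (cong_iff k _ _).mpr (le_trans (hf _ _) ?_)
  exact (cong_iff k _ _).mp (val_cast_eq k (PadicInt.toZModPow k a))

lemma isom (f : ℤ_[2] → ℤ_[2]) (hf : ∀ a b : ℤ_[2], ‖f a - f b‖ ≤ ‖a - b‖)
    (hfbij : ∀ k : ℕ, 1 ≤ k → Function.Bijective (inducedMod f k))
    (a b : ℤ_[2]) : ‖f a - f b‖ = ‖a - b‖ := by
  rcases eq_or_ne a b with rfl | hab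
  · simp
  refine le_antisymm (hf a b) ?_
  by_contra h
  push_neg at h
  have hd : a - b ≠ 0 := sub_ne_zero.mpr hab
  set m : ℕ := (a - b).valuation with hm
  have hab_norm : ‖a - b‖ = (2:ℝ) ^ (-(m:ℤ)) := by
    rw [PadicInt.norm_eq_zpow_neg_valuation hd, hm]
    norm_num
  have h2 : ‖f a - f b‖ ≤ (2:ℝ) ^ (-((m+1:ℕ):ℤ)) := lt_to_le _ m (hab_norm ▸ h)
  have h3 : PadicInt.toZModPow (m+1) (f a) = PadicInt.toZModPow (m+1) (f b) :=
    (cong_iff (m+1) _ _).mpr h2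
  have h4 : PadicInt.toZModPow (m+1) a = PadicInt.toZModPow (m+1) b := by
    apply (hfbij (m+1) (by omega)).1
    rw [induced_apply f hf, induced_apply f hf, h3]
  have h5 : ‖a - b‖ ≤ (2:ℝ) ^ (-((m+1:ℕ):ℤ)) := (cong_iff (m+1) _ _).mp h4
  rw [hab_norm] at h5
  exact absurd h5 (not_le.mpr (zpow_lt_zpow_right₀ one_lt_two (by push_cast; omega)))

lemma two_norm : ‖(2:ℤ_[2])‖ = 2⁻¹ := by
  rw [show (2:ℤ_[2]) = ((2:ℕ):ℤ_[2]) by norm_cast, PadicInt.norm_p]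
  norm_num

/-- If `F : ℤ_2^{n+1} → ℤ_2` is 1-Lipschitz w.r.t. the maximum 2-adic metric and, for every
fixed `z ∈ ℤ_2^n`, the map `x ↦ F(x, z)` is bijective modulo `2^k` for every `k ≥ 1`, then
for every 1-Lipschitz `f` that is bijective modulo `2^k` for every `k ≥ 1` and arbitrary
1-Lipschitz `g_1, …, g_n`, the map `x ↦ F(f(x), 2·g_1(x), …, 2·g_n(x))` is bijective modulo
`2^k` for every `k ≥ 1`. -/
theorem bijective_mod_comp
    (n : ℕ) (hn : 1 ≤ n) (F : (Fin (n + 1) → ℤ_[2]) → ℤ_[2])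
    (hF : ∀ a b : Fin (n + 1) → ℤ_[2], ‖F a - F b‖ ≤ ⨆ i, ‖a i - b i‖)
    (hFbij : ∀ z : Fin n → ℤ_[2], ∀ k : ℕ, 1 ≤ k →
      Function.Bijective (inducedMod (fun x => F (Fin.cons x z)) k))
    (f : ℤ_[2] → ℤ_[2]) (hf : ∀ a b : ℤ_[2], ‖f a - f b‖ ≤ ‖a - b‖)
    (hfbij : ∀ k : ℕ, 1 ≤ k → Function.Bijective (inducedMod f k))
    (g : Fin n → ℤ_[2] → ℤ_[2]) (hg : ∀ i, ∀ a b : ℤ_[2], ‖g i a - g i b‖ ≤ ‖a - b‖) :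
    ∀ k : ℕ, 1 ≤ k →
      Function.Bijective
        (inducedMod (fun x => F (Fin.cons (f x) (fun i => 2 * g i x))) k) := by
  intro k hk
  haveI : NeZero (2 ^ k) := ⟨pow_ne_zero _ two_ne_zero⟩
  rw [← Finite.injective_iff_bijective]
  intro u v huv
  set a : ℤ_[2] := ((u.val : ℕ) : ℤ_[2]) with ha
  set b : ℤ_[2] := ((v.val : ℕ) : ℤ_[2]) with hb
  have hua : PadicInt.toZModPow k a = u := val_cast_eq k u
  have hvb : PadicInt.toZModPow k b = v := val_cast_eq k v
  rw [← hua, ← hvb]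
  by_contra hne
  have hab : a ≠ b := fun h => hne (by rw [h])
  -- huv unfolded
  have huv' : PadicInt.toZModPow k (F (Fin.cons (f a) (fun i => 2 * g i a)))
      = PadicInt.toZModPow k (F (Fin.cons (f b) (fun i => 2 * g i b))) := huv
  have hd : a - b ≠ 0 := sub_ne_zero.mpr hab
  set m : ℕ := (a - b).valuation with hm
  have hab_norm : ‖a - b‖ = (2:ℝ) ^ (-(m:ℤ)) := by
    rw [PadicInt.norm_eq_zpow_neg_valuation hd, hm]
    norm_num
  have hmk : m < k := by
    have h1 : ¬ (‖a - b‖ ≤ (2:ℝ) ^ (-(k:ℤ))) := fun h => hne ((cong_iff k a b).mpr h)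
    rw [hab_norm] at h1
    push_neg at h1
    have := (zpow_lt_zpow_iff_right₀ (one_lt_two (α := ℝ))).mp h1
    omega
  set zb : Fin n → ℤ_[2] := fun i => 2 * g i b with hzb
  set za : Fin n → ℤ_[2] := fun i => 2 * g i a with hza
  set G : ℤ_[2] → ℤ_[2] := fun x => F (Fin.cons x zb) with hG
  have hGlip : ∀ x y : ℤ_[2], ‖G x - G y‖ ≤ ‖x - y‖ := by
    intro x y
    refine le_trans (hF _ _) (ciSup_le fun i => ?_)
    refine Fin.cases ?_ (fun j => ?_) i
    · simp
    · simp
  have hBnorm : ‖G (f a) - G (f b)‖ = ‖a - b‖ := by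
    rw [isom G hGlip (hFbij zb) (f a) (f b), isom f hf hfbij a b]
  have hAle : ‖F (Fin.cons (f a) za) - F (Fin.cons (f a) zb)‖ ≤ 2⁻¹ * ‖a - b‖ := by
    refine le_trans (hF _ _) (ciSup_le fun i => ?_)
    refine Fin.cases ?_ (fun j => ?_) i
    · simp [mul_nonneg, norm_nonneg]
    · show ‖2 * g j a - 2 * g j b‖ ≤ _
      rw [← mul_sub, norm_mul, two_norm]
      exact mul_le_mul_of_nonneg_left (hg j a b) (by norm_num)
  have hApow : ‖F (Fin.cons (f a) za) - F (Fin.cons (f a) zb)‖ ≤ (2:ℝ) ^ (-((m+1:ℕ):ℤ)) := by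
    refine le_trans hAle ?_
    rw [hab_norm, ← zpow_neg_one, ← zpow_add₀ (two_ne_zero (α := ℝ))]
    apply le_of_eq
    congr 1
    push_cast
    ring
  have hfinal : ‖F (Fin.cons (f a) za) - F (Fin.cons (f b) zb)‖ ≤ (2:ℝ) ^ (-(k:ℤ)) :=
    (cong_iff k _ _).mp huv'
  -- ultrametric: ‖B‖ ≤ max ‖A+B‖ ‖A‖
  have hsplit : G (f a) - G (f b)
      = (F (Fin.cons (f a) za) - F (Fin.cons (f b) zb))
        + (F (Fin.cons (f a) zb) - F (Fin.cons (f a) za)) := by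
    simp only [hG]
    ring
  have hult : ‖G (f a) - G (f b)‖ ≤
      max ‖F (Fin.cons (f a) za) - F (Fin.cons (f b) zb)‖
          ‖F (Fin.cons (f a) zb) - F (Fin.cons (f a) za)‖ := by
    rw [hsplit]
    exact PadicInt.nonarchimedean _ _
  rw [hBnorm, hab_norm] at hult
  have hAle' : ‖F (Fin.cons (f a) zb) - F (Fin.cons (f a) za)‖ ≤ (2:ℝ) ^ (-((m+1:ℕ):ℤ)) := by
    rw [← norm_neg]; simpa [neg_sub] using hApow
  have hlt1 : (2:ℝ) ^ (-(k:ℤ)) < (2:ℝ) ^ (-(m:ℤ)) :=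
    zpow_lt_zpow_right₀ one_lt_two (by omega)
  have hlt2 : (2:ℝ) ^ (-((m+1:ℕ):ℤ)) < (2:ℝ) ^ (-(m:ℤ)) :=
    zpow_lt_zpow_right₀ one_lt_two (by push_cast; omega)
  have : (2:ℝ) ^ (-(m:ℤ)) < (2:ℝ) ^ (-(m:ℤ)) :=
    lt_of_le_of_lt hult (max_lt (lt_of_le_of_lt hfinal hlt1) (lt_of_le_of_lt hAle' hlt2))
  exact absurd this (lt_irrefl _)
end

section
/- Let f : ℤ_2 → ℤ_2 be a 1-Lipschitz function that is transitive modulo 2^k for every k ≥ 1, and let g : ℤ_2 → ℤ_2 be an arbitrary 1-Lipschitz function. Then both maps x ↦ f(x + 4·g(x)) and x ↦ f(x) + 4·g(x) are 1-Lipschitz and transitive modulo 2^k for every k ≥ 1. -/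
/-- `f` is transitive modulo `2^k`: the orbit of `0` under the induced map on `ℤ/2^kℤ` is
all of `ℤ/2^kℤ`. -/
def TransitiveMod (f : ℤ_[2] → ℤ_[2]) (k : ℕ) : Prop :=
  ∀ z : ZMod (2 ^ k), ∃ n : ℕ, (inducedMod f k)^[n] 0 = z

set_option linter.unusedSectionVars false
set_option linter.unusedVariables false
set_option maxHeartbeats 1000000

open PadicInt Finset

namespace TMAux

lemma dvd_iff_norm (m : ℕ) (x : ℤ_[2]) :
    ((2^m:ℕ):ℤ_[2]) ∣ x ↔ ‖x‖ ≤ ((2:ℕ):ℝ)^(-(m:ℤ)) := by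
  rw [PadicInt.norm_le_pow_iff_mem_span_pow, Ideal.mem_span_singleton]
  constructor <;> intro h <;> (push_cast at h ⊢; exact h)

lemma lip_dvd {f : ℤ_[2] → ℤ_[2]} (hf : ∀ a b : ℤ_[2], ‖f a - f b‖ ≤ ‖a - b‖)
    (m : ℕ) {a b : ℤ_[2]} (h : ((2^m:ℕ):ℤ_[2]) ∣ a - b) : ((2^m:ℕ):ℤ_[2]) ∣ f a - f b := by
  rw [dvd_iff_norm] at h ⊢
  exact le_trans (hf a b) h

lemma pi_eq_iff_dvd (m : ℕ) (a b : ℤ_[2]) :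
    toZModPow m a = toZModPow m b ↔ ((2^m:ℕ):ℤ_[2]) ∣ a - b := by
  rw [← sub_eq_zero, ← map_sub, ← RingHom.mem_ker, PadicInt.ker_toZModPow,
    Ideal.mem_span_singleton]
  constructor <;> intro h <;> (push_cast at h ⊢; exact h)

lemma pi_val (m : ℕ) (z : ZMod (2^m)) : toZModPow m ((z.val : ℤ_[2])) = z := by
  haveI : NeZero ((2:ℕ)^m) := ⟨pow_ne_zero _ (by norm_num)⟩
  rw [map_natCast]; exact ZMod.natCast_rightInverse z

lemma lip_pi {f : ℤ_[2] → ℤ_[2]} (hf : ∀ a b : ℤ_[2], ‖f a - f b‖ ≤ ‖a - b‖)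
    (m : ℕ) {a b : ℤ_[2]} (h : toZModPow m a = toZModPow m b) :
    toZModPow m (f a) = toZModPow m (f b) := by
  rw [pi_eq_iff_dvd] at h ⊢; exact lip_dvd hf m h

lemma inducedMod_pi {f : ℤ_[2] → ℤ_[2]} (hf : ∀ a b : ℤ_[2], ‖f a - f b‖ ≤ ‖a - b‖)
    (k : ℕ) (x : ℤ_[2]) : inducedMod f k (toZModPow k x) = toZModPow k (f x) := by
  unfold inducedMod
  exact lip_pi hf k (by rw [pi_val])

lemma inducedMod_iter {f : ℤ_[2] → ℤ_[2]} (hf : ∀ a b : ℤ_[2], ‖f a - f b‖ ≤ ‖a - b‖)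
    (k n : ℕ) : (inducedMod f k)^[n] 0 = toZModPow k (f^[n] 0) := by
  induction n with
  | zero => simp
  | succ n ih =>
    rw [Function.iterate_succ_apply', ih, Function.iterate_succ_apply', inducedMod_pi hf]

lemma cast_pi (k : ℕ) (x : ℤ_[2]) :
    ZMod.castHom (pow_dvd_pow 2 (Nat.le_succ k)) (ZMod (2^k)) (toZModPow (k+1) x)
      = toZModPow k x := by
  have := PadicInt.zmod_cast_comp_toZModPow (p := 2) k (k+1) (Nat.le_succ k)
  exact congrFun (congrArg (fun h => h.toFun) this) x

lemma cast_inducedMod {f : ℤ_[2] → ℤ_[2]} (hf : ∀ a b : ℤ_[2], ‖f a - f b‖ ≤ ‖a - b‖)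
    (k : ℕ) (z : ZMod (2^(k+1))) :
    ZMod.castHom (pow_dvd_pow 2 (Nat.le_succ k)) (ZMod (2^k)) (inducedMod f (k+1) z)
      = inducedMod f k (ZMod.castHom (pow_dvd_pow 2 (Nat.le_succ k)) (ZMod (2^k)) z) := by
  unfold inducedMod
  rw [cast_pi]
  apply lip_pi hf
  rw [pi_val, ← cast_pi, pi_val]

lemma zmod_lifts {k : ℕ} (d : ZMod (2^(k+1)))
    (h : ZMod.castHom (pow_dvd_pow 2 (Nat.le_succ k)) (ZMod (2^k)) d = 0) :
    d = 0 ∨ d = ((2^k : ℕ) : ZMod (2^(k+1))) := by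
  haveI : NeZero ((2:ℕ)^k) := ⟨pow_ne_zero _ (by norm_num)⟩
  haveI : NeZero ((2:ℕ)^(k+1)) := ⟨pow_ne_zero _ (by norm_num)⟩
  have hv : ((d.val : ℕ) : ZMod (2^k)) = 0 := by
    rwa [ZMod.natCast_val, ← ZMod.castHom_apply (h := pow_dvd_pow 2 (Nat.le_succ k))]
  rw [ZMod.natCast_eq_zero_iff] at hv
  obtain ⟨c, hc⟩ := hv
  have hlt : d.val < 2^(k+1) := ZMod.val_lt d
  have hc2 : c < 2 := by
    by_contra hcc
    push_neg at hcc
    have h2 : (2:ℕ)^(k+1) ≤ 2^k * c := by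
      rw [pow_succ]; exact Nat.mul_le_mul_left _ hcc
    omega
  have hd : d = ((d.val : ℕ) : ZMod (2^(k+1))) := (ZMod.natCast_rightInverse d).symm
  interval_cases c
  · left; rw [hd, hc]; simp
  · right; rw [hd, hc]; simp

lemma pow_ne_zero_zmod (k : ℕ) : ((2^k : ℕ) : ZMod (2^(k+1))) ≠ 0 := by
  rw [Ne, ZMod.natCast_eq_zero_iff]
  intro h
  have h1 := Nat.le_of_dvd (by positivity) h
  have h2 : (2:ℕ)^k < 2^(k+1) := Nat.pow_lt_pow_succ (by norm_num)
  omega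

section Orbit
variable {α : Type*} [Fintype α] [DecidableEq α] {F : α → α} {x₀ : α}

lemma period_mul {T : ℕ} (hT : F^[T] x₀ = x₀) (q : ℕ) : F^[q * T] x₀ = x₀ := by
  induction q with
  | zero => simp
  | succ q ih =>
    have h : (q+1) * T = q * T + T := by ring
    rw [h, Function.iterate_add_apply, hT, ih]

lemma period_reduce {T : ℕ} (hT : F^[T] x₀ = x₀) (q r : ℕ) :
    F^[q * T + r] x₀ = F^[r] x₀ := by
  have h : q * T + r = r + q * T := by ring
  rw [h, Function.iterate_add_apply, period_mul hT]

lemma period_surj {T : ℕ} (hT1 : 1 ≤ T) (hT : F^[T] x₀ = x₀)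
    (hsurj : ∀ z, ∃ n, F^[n] x₀ = z) (z : α) : ∃ n < T, F^[n] x₀ = z := by
  obtain ⟨n, hn⟩ := hsurj z
  refine ⟨n % T, Nat.mod_lt _ hT1, ?_⟩
  have h : n / T * T + n % T = n := by
    rw [Nat.div_add_mod' n T]
  rw [← period_reduce hT (n / T) (n % T), h]
  exact hn

lemma card_le_period {T : ℕ} (hT1 : 1 ≤ T) (hT : F^[T] x₀ = x₀)
    (hsurj : ∀ z, ∃ n, F^[n] x₀ = z) : Fintype.card α ≤ T := by
  classical
  have hsub : (Finset.univ : Finset α) ⊆ (Finset.range T).image (fun n => F^[n] x₀) := by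
    intro z _
    obtain ⟨n, hn, he⟩ := period_surj hT1 hT hsurj z
    exact Finset.mem_image.mpr ⟨n, Finset.mem_range.mpr hn, he⟩
  calc Fintype.card α = (Finset.univ : Finset α).card := rfl
    _ ≤ ((Finset.range T).image (fun n => F^[n] x₀)).card := Finset.card_le_card hsub
    _ ≤ (Finset.range T).card := Finset.card_image_le
    _ = T := Finset.card_range T

lemma exists_small_period (hbij : Function.Bijective F)
    (hsurj : ∀ z, ∃ n, F^[n] x₀ = z) :
    ∃ T, 1 ≤ T ∧ T ≤ Fintype.card α ∧ F^[T] x₀ = x₀ := by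
  classical
  have hcard : (Finset.univ : Finset α).card < (Finset.range (Fintype.card α + 1)).card := by
    simp
  obtain ⟨i, hi, j, hj, hij, he⟩ :=
    Finset.exists_ne_map_eq_of_card_lt_of_maps_to hcard
      (fun n _ => Finset.mem_univ (F^[n] x₀))
  rcases Nat.lt_or_ge i j with hlt | hge
  · refine ⟨j - i, by omega, by simp at hi hj; omega, ?_⟩
    have h1 : F^[i] (F^[j-i] x₀) = F^[i] x₀ := by
      rw [← Function.iterate_add_apply]
      have h2 : i + (j - i) = j := by omega
      rw [h2, he]
    exact (hbij.1.iterate i) h1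
  · have hlt : j < i := by omega
    refine ⟨i - j, by omega, by simp at hi hj; omega, ?_⟩
    have h1 : F^[j] (F^[i-j] x₀) = F^[j] x₀ := by
      rw [← Function.iterate_add_apply]
      have h2 : j + (i - j) = i := by omega
      rw [h2, he]
    exact (hbij.1.iterate j) h1

lemma orbit_period (hbij : Function.Bijective F) (hsurj : ∀ z, ∃ n, F^[n] x₀ = z) :
    F^[Fintype.card α] x₀ = x₀ := by
  obtain ⟨T, h1, h2, hT⟩ := exists_small_period hbij hsurj
  have h3 := card_le_period h1 hT hsurj
  have hTc : T = Fintype.card α := le_antisymm h2 h3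
  rwa [hTc] at hT

lemma orbit_surj_lt (hbij : Function.Bijective F) (hsurj : ∀ z, ∃ n, F^[n] x₀ = z) (z : α) :
    ∃ n < Fintype.card α, F^[n] x₀ = z := by
  have h0 : 0 < Fintype.card α := Fintype.card_pos_iff.mpr ⟨x₀⟩
  exact period_surj h0 (orbit_period hbij hsurj) hsurj z

lemma orbit_inj (hbij : Function.Bijective F) (hsurj : ∀ z, ∃ n, F^[n] x₀ = z)
    {i j : ℕ} (hi : i < Fintype.card α) (hj : j < Fintype.card α)
    (he : F^[i] x₀ = F^[j] x₀) : i = j := by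
  by_contra hne
  wlog hlt : i < j generalizing i j
  · exact this hj hi he.symm (Ne.symm hne) (by omega)
  have hT : F^[j - i] x₀ = x₀ := by
    apply hbij.1.iterate i
    rw [← Function.iterate_add_apply]
    have h2 : i + (j - i) = j := by omega
    rw [h2, ← he]
  have h3 := card_le_period (by omega) hT hsurj
  omega

end Orbit

end TMAux

namespace TMAux

lemma bij_of_transitive_succ {f : ℤ_[2] → ℤ_[2]} (hf : ∀ a b : ℤ_[2], ‖f a - f b‖ ≤ ‖a - b‖)
    (k : ℕ) (ht : TransitiveMod f (k+1)) : Function.Bijective (inducedMod f k) := by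
  haveI : NeZero ((2:ℕ)^k) := ⟨pow_ne_zero _ (by norm_num)⟩
  haveI : NeZero ((2:ℕ)^(k+1)) := ⟨pow_ne_zero _ (by norm_num)⟩
  rw [Fintype.bijective_iff_surjective_and_card]
  refine ⟨?_, rfl⟩
  intro a
  have hlift : ∃ b : ZMod (2^(k+1)), b ≠ 0 ∧
      ZMod.castHom (pow_dvd_pow 2 (Nat.le_succ k)) (ZMod (2^k)) b = a := by
    by_cases h0 : ((a.val : ℕ) : ZMod (2^(k+1))) = 0
    · refine ⟨((a.val : ℕ) : ZMod (2^(k+1))) + ((2^k : ℕ) : ZMod (2^(k+1))), ?_, ?_⟩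
      · rw [h0, zero_add]; exact pow_ne_zero_zmod k
      · rw [map_add, map_natCast, map_natCast]
        have h1 : ((2^k : ℕ) : ZMod (2^k)) = 0 := by
          rw [ZMod.natCast_eq_zero_iff]
        rw [h1, add_zero, ZMod.natCast_rightInverse a]
    · refine ⟨((a.val : ℕ) : ZMod (2^(k+1))), h0, ?_⟩
      rw [map_natCast]
      exact ZMod.natCast_rightInverse a
  obtain ⟨b, hb0, hba⟩ := hlift
  obtain ⟨n, hn⟩ := ht b
  cases n with
  | zero => exact absurd hn.symm (by simpa using hb0)
  | succ n =>
    rw [Function.iterate_succ_apply'] at hn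
    refine ⟨ZMod.castHom (pow_dvd_pow 2 (Nat.le_succ k)) (ZMod (2^k))
      ((inducedMod f (k+1))^[n] 0), ?_⟩
    rw [← cast_inducedMod hf, hn, hba]

lemma shift_A {f : ℤ_[2] → ℤ_[2]} (hf : ∀ a b : ℤ_[2], ‖f a - f b‖ ≤ ‖a - b‖)
    (k : ℕ) (hinj : Function.Injective (inducedMod f (k+1))) (z : ZMod (2^(k+1))) :
    inducedMod f (k+1) (z + ((2^k:ℕ) : ZMod (2^(k+1))))
      = inducedMod f (k+1) z + ((2^k:ℕ) : ZMod (2^(k+1))) := by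
  set c : ZMod (2^(k+1)) := ((2^k:ℕ) : ZMod (2^(k+1))) with hc
  have hcast : ZMod.castHom (pow_dvd_pow 2 (Nat.le_succ k)) (ZMod (2^k))
      (inducedMod f (k+1) (z + c) - inducedMod f (k+1) z) = 0 := by
    rw [map_sub, cast_inducedMod hf, cast_inducedMod hf, map_add]
    have h1 : ZMod.castHom (pow_dvd_pow 2 (Nat.le_succ k)) (ZMod (2^k)) c = 0 := by
      rw [hc, map_natCast, ZMod.natCast_eq_zero_iff]
    rw [h1, add_zero, sub_self]
  rcases zmod_lifts _ hcast with h | h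
  · exfalso
    have h2 : inducedMod f (k+1) (z + c) = inducedMod f (k+1) z := sub_eq_zero.mp h
    have heq := hinj h2
    have h3 : c = 0 := by linear_combination heq
    exact pow_ne_zero_zmod k h3
  · have h2 := sub_eq_iff_eq_add.mp h
    rw [h2]; ring

lemma shift_B {f : ℤ_[2] → ℤ_[2]} (hf : ∀ a b : ℤ_[2], ‖f a - f b‖ ≤ ‖a - b‖)
    (k : ℕ) (hinj : Function.Injective (inducedMod f (k+1))) (x : ℤ_[2]) :
    toZModPow (k+1) (f (x + ((2^k:ℕ):ℤ_[2])))
      = toZModPow (k+1) (f x) + ((2^k:ℕ) : ZMod (2^(k+1))) := by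
  have h1 : toZModPow (k+1) (x + ((2^k:ℕ):ℤ_[2]))
      = toZModPow (k+1) x + ((2^k:ℕ) : ZMod (2^(k+1))) := by
    rw [map_add, map_natCast]
  rw [← inducedMod_pi hf, h1, shift_A hf k hinj, inducedMod_pi hf]

lemma two_cases (t : ℤ_[2]) : ((2^1:ℕ):ℤ_[2]) ∣ t ∨ ((2^1:ℕ):ℤ_[2]) ∣ (t - 1) := by
  have h := pi_eq_iff_dvd 1 t 0
  have h' := pi_eq_iff_dvd 1 t 1
  have hall : ∀ d : ZMod (2^1), d = 0 ∨ d = 1 := by decide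
  rcases hall (toZModPow 1 t) with h0 | h1
  · left; rw [← sub_zero t]; exact h.mp (by rw [h0, map_zero])
  · right; exact h'.mp (by rw [h1, map_one])

lemma E_invariance {f : ℤ_[2] → ℤ_[2]} (hf : ∀ a b : ℤ_[2], ‖f a - f b‖ ≤ ‖a - b‖)
    (k : ℕ) (hB : ∀ x : ℤ_[2], toZModPow (k+1) (f (x + ((2^k:ℕ):ℤ_[2])))
      = toZModPow (k+1) (f x) + ((2^k:ℕ) : ZMod (2^(k+1))))
    {x y : ℤ_[2]} (hxy : ((2^k:ℕ):ℤ_[2]) ∣ x - y) :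
    toZModPow (k+1) (f x - x) = toZModPow (k+1) (f y - y) := by
  obtain ⟨t, ht⟩ := hxy
  have hx : x = y + ((2^k:ℕ):ℤ_[2]) * t := by linear_combination ht
  rcases two_cases t with ⟨s, hs⟩ | ⟨s, hs⟩
  · have hcong : toZModPow (k+1) x = toZModPow (k+1) y := by
      rw [pi_eq_iff_dvd]
      refine ⟨s, ?_⟩
      rw [hx]
      push_cast
      push_cast at hs
      linear_combination (2:ℤ_[2])^k * hs
    rw [map_sub, map_sub, hcong, lip_pi hf _ hcong]
  · have hcong : toZModPow (k+1) x = toZModPow (k+1) (y + ((2^k:ℕ):ℤ_[2])) := by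
      rw [pi_eq_iff_dvd]
      refine ⟨s, ?_⟩
      rw [hx]
      push_cast
      push_cast at hs
      linear_combination (2:ℤ_[2])^k * hs
    have hfx : toZModPow (k+1) (f x) = toZModPow (k+1) (f y) + ((2^k:ℕ) : ZMod (2^(k+1))) := by
      rw [lip_pi hf _ hcong, hB]
    have hxx : toZModPow (k+1) x = toZModPow (k+1) y + ((2^k:ℕ) : ZMod (2^(k+1))) := by
      rw [hcong, map_add, map_natCast]
    rw [map_sub, map_sub, hfx, hxx]
    ring

lemma gsum {g : ℤ_[2] → ℤ_[2]} (hg : ∀ a b : ℤ_[2], ‖g a - g b‖ ≤ ‖a - b‖) (m : ℕ) :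
    ((2^m:ℕ):ℤ_[2]) ∣ 2 * ∑ n ∈ range (2^m), g ((n:ℤ_[2])) := by
  induction m with
  | zero => simp
  | succ m ih =>
    have hsplit : ∑ n ∈ range (2^(m+1)), g ((n:ℤ_[2]))
        = (∑ n ∈ range (2^m), g ((n:ℤ_[2]))) + ∑ n ∈ range (2^m), g (((2^m + n : ℕ):ℤ_[2])) := by
      rw [← Finset.sum_range_add]
      congr 1
      rw [pow_succ]; ring
    have hterm : ∀ n : ℕ, ((2^m:ℕ):ℤ_[2]) ∣ g (((2^m + n : ℕ):ℤ_[2])) - g ((n:ℤ_[2])) := by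
      intro n
      apply lip_dvd hg
      push_cast
      exact ⟨1, by ring⟩
    have hdvd : ((2^m:ℕ):ℤ_[2]) ∣
        (∑ n ∈ range (2^m), g (((2^m + n : ℕ):ℤ_[2]))) - ∑ n ∈ range (2^m), g ((n:ℤ_[2])) := by
      rw [← Finset.sum_sub_distrib]
      exact Finset.dvd_sum (fun n _ => hterm n)
    obtain ⟨c, hc⟩ := hdvd
    obtain ⟨d, hd⟩ := ih
    refine ⟨d + c, ?_⟩
    rw [hsplit]
    have e1 : ∑ n ∈ range (2^m), g (((2^m + n : ℕ):ℤ_[2]))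
        = (∑ n ∈ range (2^m), g ((n:ℤ_[2]))) + ((2^m:ℕ):ℤ_[2]) * c := by
      rw [← hc]; ring
    rw [e1]
    push_cast
    push_cast at hd
    linear_combination 2 * hd

lemma orbit_sum {h : ℤ_[2] → ℤ_[2]} (k M : ℕ)
    (hinj : ∀ i j : ℕ, i < 2^k → j < 2^k →
      toZModPow k (h^[i] 0) = toZModPow k (h^[j] 0) → i = j)
    (hsurj : ∀ z : ZMod (2^k), ∃ n, n < 2^k ∧ toZModPow k (h^[n] 0) = z)
    (φ : ℤ_[2] → ℤ_[2])
    (hφ : ∀ a b : ℤ_[2], ((2^k:ℕ):ℤ_[2]) ∣ a - b → ((2^M:ℕ):ℤ_[2]) ∣ φ a - φ b) :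
    ((2^M:ℕ):ℤ_[2]) ∣ (∑ n ∈ range (2^k), φ (h^[n] 0)) - ∑ n ∈ range (2^k), φ ((n:ℤ_[2])) := by
  haveI : NeZero ((2:ℕ)^k) := ⟨pow_ne_zero _ (by norm_num)⟩
  set u : ℕ → ℕ := fun n => (toZModPow k (h^[n] 0)).val with hu
  have hstep2 : ∑ n ∈ range (2^k), φ ((u n : ℤ_[2])) = ∑ n ∈ range (2^k), φ ((n:ℤ_[2])) := by
    apply Finset.sum_bij (i := fun n _ => u n)
    · intro a ha
      rw [Finset.mem_range]
      exact ZMod.val_lt _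
    · intro a ha b hb he
      apply hinj a b (Finset.mem_range.mp ha) (Finset.mem_range.mp hb)
      have h1 : ((u a : ℕ) : ZMod (2^k)) = ((u b : ℕ) : ZMod (2^k)) := by rw [he]
      rwa [hu, ZMod.natCast_rightInverse _, ZMod.natCast_rightInverse _] at h1
    · intro t ht
      obtain ⟨n, hn, he⟩ := hsurj ((t : ℕ) : ZMod (2^k))
      refine ⟨n, Finset.mem_range.mpr hn, ?_⟩
      rw [hu]
      simp only []
      rw [he, ZMod.val_cast_of_lt (Finset.mem_range.mp ht)]
    · intro a ha
      rfl
  rw [← hstep2, ← Finset.sum_sub_distrib]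
  apply Finset.dvd_sum
  intro n _
  apply hφ
  rw [← pi_eq_iff_dvd, pi_val]

end TMAux

namespace TMAux

lemma lip_add4 {f g : ℤ_[2] → ℤ_[2]} (hf : ∀ a b : ℤ_[2], ‖f a - f b‖ ≤ ‖a - b‖)
    (hg : ∀ a b : ℤ_[2], ‖g a - g b‖ ≤ ‖a - b‖) (a b : ℤ_[2]) :
    ‖(f a + 4 * g a) - (f b + 4 * g b)‖ ≤ ‖a - b‖ := by
  have he : (f a + 4 * g a) - (f b + 4 * g b) = (f a - f b) + 4 * (g a - g b) := by ring
  rw [he]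
  refine le_trans (PadicInt.nonarchimedean _ _) (max_le (hf a b) ?_)
  calc ‖(4:ℤ_[2]) * (g a - g b)‖ = ‖(4:ℤ_[2])‖ * ‖g a - g b‖ := norm_mul _ _
    _ ≤ 1 * ‖g a - g b‖ := by
        apply mul_le_mul_of_nonneg_right (PadicInt.norm_le_one _) (norm_nonneg _)
    _ = ‖g a - g b‖ := one_mul _
    _ ≤ ‖a - b‖ := hg a b

-- main inductive lemma
lemma main_trans {f g : ℤ_[2] → ℤ_[2]}
    (hf : ∀ a b : ℤ_[2], ‖f a - f b‖ ≤ ‖a - b‖)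
    (hftrans : ∀ k : ℕ, 1 ≤ k → TransitiveMod f k)
    (hg : ∀ a b : ℤ_[2], ‖g a - g b‖ ≤ ‖a - b‖) :
    ∀ k : ℕ, 1 ≤ k → TransitiveMod (fun x => f x + 4 * g x) k ∧
      Function.Bijective (inducedMod (fun x => f x + 4 * g x) k) := by
  set h : ℤ_[2] → ℤ_[2] := fun x => f x + 4 * g x with hh_def
  have hh : ∀ a b : ℤ_[2], ‖h a - h b‖ ≤ ‖a - b‖ := lip_add4 hf hg
  have hfour : (4:ℤ_[2]) = ((2^2:ℕ):ℤ_[2]) := by norm_num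
  have Fbij : ∀ m : ℕ, Function.Bijective (inducedMod f m) := fun m =>
    bij_of_transitive_succ hf m (hftrans (m+1) (by omega))
  -- base : mod 2 the two maps agree
  have base : TransitiveMod h 1 ∧ Function.Bijective (inducedMod h 1) := by
    have he : inducedMod h 1 = inducedMod f 1 := by
      funext z
      unfold inducedMod
      rw [pi_eq_iff_dvd]
      have : h ((z.val:ℤ_[2])) - f ((z.val:ℤ_[2])) = 4 * g ((z.val:ℤ_[2])) := by
        rw [hh_def]; ring
      rw [this, hfour]
      exact Dvd.dvd.mul_right ⟨((2:ℤ_[2])), by push_cast; ring⟩ _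
    constructor
    · intro z; rw [he]; exact hftrans 1 le_rfl z
    · rw [he]; exact Fbij 1
  -- inductive step
  have step : ∀ k : ℕ, 1 ≤ k →
      (TransitiveMod h k ∧ Function.Bijective (inducedMod h k)) →
      (TransitiveMod h (k+1) ∧ Function.Bijective (inducedMod h (k+1))) := by
    intro k hk1 ⟨Thk, Hbijk⟩
    haveI : NeZero ((2:ℕ)^k) := ⟨pow_ne_zero _ (by norm_num)⟩
    haveI : NeZero ((2:ℕ)^(k+1)) := ⟨pow_ne_zero _ (by norm_num)⟩
    obtain ⟨k', rfl⟩ : ∃ k', k = k' + 1 := ⟨k - 1, by omega⟩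
    set k : ℕ := k' + 1 with hk_def
    set c : ZMod (2^(k+1)) := ((2^k:ℕ) : ZMod (2^(k+1))) with hc_def
    -- pointwise shift for f
    have hBf : ∀ x : ℤ_[2], toZModPow (k+1) (f (x + ((2^k:ℕ):ℤ_[2])))
        = toZModPow (k+1) (f x) + c := shift_B hf k (Fbij (k+1)).1
    -- pointwise shift for h
    have hBh : ∀ x : ℤ_[2], toZModPow (k+1) (h (x + ((2^k:ℕ):ℤ_[2])))
        = toZModPow (k+1) (h x) + c := by
      intro x
      have hd : ((2^(k+1):ℕ):ℤ_[2]) ∣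
          (h (x + ((2^k:ℕ):ℤ_[2])) - h x) - (f (x + ((2^k:ℕ):ℤ_[2])) - f x) := by
        have he : (h (x + ((2^k:ℕ):ℤ_[2])) - h x) - (f (x + ((2^k:ℕ):ℤ_[2])) - f x)
            = 4 * (g (x + ((2^k:ℕ):ℤ_[2])) - g x) := by rw [hh_def]; ring
        rw [he]
        obtain ⟨t, ht⟩ : ((2^k:ℕ):ℤ_[2]) ∣ g (x + ((2^k:ℕ):ℤ_[2])) - g x := by
          apply lip_dvd hg
          exact ⟨1, by ring⟩
        refine ⟨2 * t, ?_⟩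
        rw [ht]
        push_cast
        ring
      have he2 : toZModPow (k+1) (h (x + ((2^k:ℕ):ℤ_[2])) - h x)
          = toZModPow (k+1) (f (x + ((2^k:ℕ):ℤ_[2])) - f x) := by
        rw [pi_eq_iff_dvd]
        have : (h (x + ((2^k:ℕ):ℤ_[2])) - h x) - (f (x + ((2^k:ℕ):ℤ_[2])) - f x)
            = (h (x + ((2^k:ℕ):ℤ_[2])) - h x) - (f (x + ((2^k:ℕ):ℤ_[2])) - f x) := rfl
        exact hd
      rw [map_sub, map_sub] at he2
      have := hBf x
      have hgoal : toZModPow (k+1) (h (x + ((2^k:ℕ):ℤ_[2])))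
          = toZModPow (k+1) (h x) + c := by
        linear_combination he2 + this
      exact hgoal
    -- orbit facts for h at level k
    have hcard : Fintype.card (ZMod (2^k)) = 2^k := ZMod.card _
    have hsurj0 : ∀ z : ZMod (2^k), ∃ n : ℕ, (inducedMod h k)^[n] 0 = z := Thk
    have hper_h : toZModPow k (h^[2^k] 0) = 0 := by
      have := orbit_period Hbijk hsurj0
      rw [hcard] at this
      rw [← inducedMod_iter hh]
      exact this
    have hinj_h : ∀ i j : ℕ, i < 2^k → j < 2^k →
        toZModPow k (h^[i] 0) = toZModPow k (h^[j] 0) → i = j := by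
      intro i j hi hj he
      refine orbit_inj Hbijk hsurj0 (by rw [hcard]; exact hi) (by rw [hcard]; exact hj) ?_
      rw [inducedMod_iter hh, inducedMod_iter hh]
      exact he
    have hsurj_h : ∀ z : ZMod (2^k), ∃ n, n < 2^k ∧ toZModPow k (h^[n] 0) = z := by
      intro z
      obtain ⟨n, hn, he⟩ := orbit_surj_lt Hbijk hsurj0 z
      exact ⟨n, by rw [hcard] at hn; exact hn, by rw [← inducedMod_iter hh]; exact he⟩
    -- orbit facts for f at level k
    have hsurjf0 : ∀ z : ZMod (2^k), ∃ n : ℕ, (inducedMod f k)^[n] 0 = z :=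
      hftrans k (by omega)
    have hper_f : toZModPow k (f^[2^k] 0) = 0 := by
      have := orbit_period (Fbij k) hsurjf0
      rw [hcard] at this
      rw [← inducedMod_iter hf]
      exact this
    have hinj_f : ∀ i j : ℕ, i < 2^k → j < 2^k →
        toZModPow k (f^[i] 0) = toZModPow k (f^[j] 0) → i = j := by
      intro i j hi hj he
      refine orbit_inj (Fbij k) hsurjf0 (by rw [hcard]; exact hi) (by rw [hcard]; exact hj) ?_
      rw [inducedMod_iter hf, inducedMod_iter hf]
      exact he
    have hsurj_f : ∀ z : ZMod (2^k), ∃ n, n < 2^k ∧ toZModPow k (f^[n] 0) = z := by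
      intro z
      obtain ⟨n, hn, he⟩ := orbit_surj_lt (Fbij k) hsurjf0 z
      exact ⟨n, by rw [hcard] at hn; exact hn, by rw [← inducedMod_iter hf]; exact he⟩
    -- claim 1 : π_{k+1} (f^[2^k] 0) = c
    have claim1 : toZModPow (k+1) (f^[2^k] 0) = c := by
      have hcast0 : ZMod.castHom (pow_dvd_pow 2 (Nat.le_succ k)) (ZMod (2^k))
          (toZModPow (k+1) (f^[2^k] 0)) = 0 := by
        rw [cast_pi]; exact hper_f
      rcases zmod_lifts _ hcast0 with h0 | hok
      · exfalso
        have hsurjf1 : ∀ z : ZMod (2^(k+1)), ∃ n : ℕ, (inducedMod f (k+1))^[n] 0 = z :=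
          hftrans (k+1) (by omega)
        have hcard1 : Fintype.card (ZMod (2^(k+1))) = 2^(k+1) := ZMod.card _
        have hzero : toZModPow (k+1) (f^[0] 0) = 0 := by simp
        have heq : (2:ℕ)^k = 0 := by
          refine orbit_inj (Fbij (k+1)) hsurjf1 ?_ ?_ ?_
          · rw [hcard1]; exact Nat.pow_lt_pow_succ (by norm_num)
          · rw [hcard1]; positivity
          · rw [inducedMod_iter hf, inducedMod_iter hf, h0, hzero]
        exact absurd heq (by positivity)
      · exact hok
    -- claim 2 : π_{k+1} (h^[2^k] 0) = c   (the sum comparison)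
    have claim2 : toZModPow (k+1) (h^[2^k] 0) = c := by
      -- telescopes
      have tel : ∀ w : ℤ_[2] → ℤ_[2],
          w^[2^k] 0 = ∑ n ∈ range (2^k), (w (w^[n] 0) - w^[n] 0) := by
        intro w
        have := Finset.sum_range_sub (fun n => w^[n] 0) (2^k)
        simp only [Function.iterate_succ_apply'] at this
        rw [this, Function.iterate_zero_apply, sub_zero]
      have hEinv : ∀ a b : ℤ_[2], ((2^k:ℕ):ℤ_[2]) ∣ a - b →
          ((2^(k+1):ℕ):ℤ_[2]) ∣ (f a - a) - (f b - b) := by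
        intro a b hab
        rw [← pi_eq_iff_dvd]
        exact E_invariance hf k (fun x => hBf x) hab
      have hgd : ∀ a b : ℤ_[2], ((2^k:ℕ):ℤ_[2]) ∣ a - b →
          ((2^k':ℕ):ℤ_[2]) ∣ g a - g b := by
        intro a b hab
        apply lip_dvd hg
        obtain ⟨t, ht⟩ := hab
        refine ⟨2 * t, ?_⟩
        rw [ht]
        push_cast
        rw [hk_def]
        ring
      obtain ⟨t1, e1⟩ := orbit_sum k (k+1) hinj_h hsurj_h (fun x => f x - x) hEinv
      obtain ⟨t2, e2⟩ := orbit_sum k (k+1) hinj_f hsurj_f (fun x => f x - x) hEinv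
      obtain ⟨t3, e3⟩ := orbit_sum k k' hinj_h hsurj_h g hgd
      obtain ⟨t4, e4⟩ := gsum hg k
      have hdvd : ((2^(k+1):ℕ):ℤ_[2]) ∣ h^[2^k] 0 - f^[2^k] 0 := by
        refine ⟨t1 - t2 + t3 + t4, ?_⟩
        rw [tel h, tel f]
        have hterm : ∀ n : ℕ, h (h^[n] 0) - h^[n] 0
            = (f (h^[n] 0) - h^[n] 0) + 4 * g (h^[n] 0) := by
          intro n; rw [hh_def]; ring
        rw [Finset.sum_congr rfl (fun n _ => hterm n), Finset.sum_add_distrib,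
          ← Finset.mul_sum]
        push_cast at e1 e2 e3 e4 ⊢
        rw [hk_def] at *
        linear_combination e1 - e2 + 4 * e3 + 2 * e4
      have := (pi_eq_iff_dvd (k+1) _ _).mpr hdvd
      rw [this, claim1]
    -- shift of orbit
    have hshift : ∀ n : ℕ, toZModPow (k+1) (h^[n + 2^k] 0)
        = toZModPow (k+1) (h^[n] 0) + c := by
      intro n
      induction n with
      | zero =>
        simp only [Nat.zero_add, Function.iterate_zero_apply]
        rw [claim2, map_zero, zero_add]
      | succ n ih =>
        have hidx : n + 1 + 2^k = (n + 2^k) + 1 := by omega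
        rw [hidx, Function.iterate_succ_apply', Function.iterate_succ_apply']
        have hcong : toZModPow (k+1) (h^[n + 2^k] 0)
            = toZModPow (k+1) (h^[n] 0 + ((2^k:ℕ):ℤ_[2])) := by
          rw [map_add, map_natCast, ih]
        rw [lip_pi hh _ hcong, hBh]
    -- transitivity at k+1
    have trans1 : TransitiveMod h (k+1) := by
      intro z
      obtain ⟨n, hn⟩ := Thk (ZMod.castHom (pow_dvd_pow 2 (Nat.le_succ k)) (ZMod (2^k)) z)
      rw [inducedMod_iter hh] at hn
      have hcast : ZMod.castHom (pow_dvd_pow 2 (Nat.le_succ k)) (ZMod (2^k))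
          (z - toZModPow (k+1) (h^[n] 0)) = 0 := by
        rw [map_sub, cast_pi, hn, sub_self]
      rcases zmod_lifts _ hcast with h0 | hc
      · refine ⟨n, ?_⟩
        rw [inducedMod_iter hh]
        have := sub_eq_zero.mp h0
        exact this.symm
      · refine ⟨n + 2^k, ?_⟩
        rw [inducedMod_iter hh, hshift n]
        have : z = toZModPow (k+1) (h^[n] 0) + c := by linear_combination hc
        exact this.symm
    -- bijectivity at k+1
    have hAh : ∀ z : ZMod (2^(k+1)), inducedMod h (k+1) (z + c)
        = inducedMod h (k+1) z + c := by
      intro z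
      unfold inducedMod
      have hcong : toZModPow (k+1) (((z + c).val : ℤ_[2]))
          = toZModPow (k+1) ((z.val : ℤ_[2]) + ((2^k:ℕ):ℤ_[2])) := by
        have h1 : toZModPow (k+1) ((z.val : ℤ_[2])) = z := pi_val _ _
        have h2 : toZModPow (k+1) (((2^k:ℕ) : ℤ_[2])) = c := by rw [map_natCast]
        rw [pi_val, map_add, h1, h2]
      rw [lip_pi hh _ hcong, hBh]
    have bij1 : Function.Bijective (inducedMod h (k+1)) := by
      rw [Fintype.bijective_iff_injective_and_card]
      refine ⟨?_, rfl⟩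
      intro a b he
      have hcasteq : ZMod.castHom (pow_dvd_pow 2 (Nat.le_succ k)) (ZMod (2^k)) a
          = ZMod.castHom (pow_dvd_pow 2 (Nat.le_succ k)) (ZMod (2^k)) b := by
        apply Hbijk.1
        rw [← cast_inducedMod hh, ← cast_inducedMod hh, he]
      have hcast0 : ZMod.castHom (pow_dvd_pow 2 (Nat.le_succ k)) (ZMod (2^k)) (a - b) = 0 := by
        rw [map_sub, hcasteq, sub_self]
      rcases zmod_lifts _ hcast0 with h0 | hcc
      · linear_combination h0
      · exfalso
        have ha : a = b + c := by linear_combination hcc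
        rw [ha, hAh] at he
        have : c = 0 := by linear_combination he
        exact pow_ne_zero_zmod k this
    exact ⟨trans1, bij1⟩
  -- put it together
  intro k hk
  induction k with
  | zero => omega
  | succ n ih =>
    rcases Nat.lt_or_ge n 1 with hn | hn
    · have : n = 0 := by omega
      subst this
      exact base
    · exact step n hn (ih hn)

end TMAux

namespace TMAux

lemma pow_dvd_cast {m n : ℕ} (hmn : m ≤ n) : ((2^m:ℕ):ℤ_[2]) ∣ ((2^n:ℕ):ℤ_[2]) := by
  obtain ⟨d, hd⟩ := pow_dvd_pow 2 hmn
  exact ⟨(d:ℤ_[2]), by rw [hd]; push_cast; ring⟩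

lemma phi_dvd_rev {g : ℤ_[2] → ℤ_[2]} (hg : ∀ a b : ℤ_[2], ‖g a - g b‖ ≤ ‖a - b‖)
    (m : ℕ) (a b : ℤ_[2])
    (h : ((2^m:ℕ):ℤ_[2]) ∣ (a + 4 * g a) - (b + 4 * g b)) :
    ((2^m:ℕ):ℤ_[2]) ∣ a - b := by
  induction m with
  | zero =>
    have h1 : ((2^0:ℕ):ℤ_[2]) = 1 := by norm_num
    rw [h1]
    exact one_dvd _
  | succ m ih =>
    have hm : ((2^m:ℕ):ℤ_[2]) ∣ (a + 4 * g a) - (b + 4 * g b) :=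
      dvd_trans (pow_dvd_cast (Nat.le_succ m)) h
    have hab := ih hm
    obtain ⟨t, ht⟩ := lip_dvd hg m hab
    have h4 : ((2^(m+1):ℕ):ℤ_[2]) ∣ 4 * (g a - g b) := by
      refine ⟨2 * t, ?_⟩
      rw [ht]; push_cast; ring
    have he : a - b = ((a + 4 * g a) - (b + 4 * g b)) - 4 * (g a - g b) := by ring
    rw [he]
    exact dvd_sub h h4

lemma comp_inducedMod {f φ : ℤ_[2] → ℤ_[2]} (hf : ∀ a b : ℤ_[2], ‖f a - f b‖ ≤ ‖a - b‖)
    (k : ℕ) : inducedMod (fun x => f (φ x)) k = fun z => inducedMod f k (inducedMod φ k z) := by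
  funext z
  show toZModPow k (f (φ ((z.val : ℤ_[2]))))
    = toZModPow k (f (((inducedMod φ k z).val : ℤ_[2])))
  exact lip_pi hf k (by rw [pi_val]; rfl)

end TMAux


open TMAux

/-- If `f : ℤ_2 → ℤ_2` is 1-Lipschitz and transitive modulo `2^k` for every `k ≥ 1`, and `g`
is an arbitrary 1-Lipschitz function, then both `x ↦ f(x + 4·g(x))` and `x ↦ f(x) + 4·g(x)`
are 1-Lipschitz and transitive modulo `2^k` for every `k ≥ 1`. -/
theorem transitive_mod_perturbation
    (f g : ℤ_[2] → ℤ_[2])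
    (hf : ∀ a b : ℤ_[2], ‖f a - f b‖ ≤ ‖a - b‖)
    (hftrans : ∀ k : ℕ, 1 ≤ k → TransitiveMod f k)
    (hg : ∀ a b : ℤ_[2], ‖g a - g b‖ ≤ ‖a - b‖) :
    ((∀ a b : ℤ_[2], ‖f (a + 4 * g a) - f (b + 4 * g b)‖ ≤ ‖a - b‖) ∧
      (∀ k : ℕ, 1 ≤ k → TransitiveMod (fun x => f (x + 4 * g x)) k)) ∧
    ((∀ a b : ℤ_[2], ‖(f a + 4 * g a) - (f b + 4 * g b)‖ ≤ ‖a - b‖) ∧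
      (∀ k : ℕ, 1 ≤ k → TransitiveMod (fun x => f x + 4 * g x) k)) := by
  have hid : ∀ a b : ℤ_[2], ‖(fun x => x) a - (fun x => x) b‖ ≤ ‖a - b‖ :=
    fun a b => le_rfl
  have hphi : ∀ a b : ℤ_[2], ‖(a + 4 * g a) - (b + 4 * g b)‖ ≤ ‖a - b‖ :=
    lip_add4 hid hg
  have hg' : ∀ a b : ℤ_[2], ‖g (f a) - g (f b)‖ ≤ ‖a - b‖ :=
    fun a b => le_trans (hg (f a) (f b)) (hf a b)
  have main2 := main_trans hf hftrans hg
  have main2' := main_trans hf hftrans hg'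
  refine ⟨⟨fun a b => le_trans (hf _ _) (hphi a b), ?_⟩,
    fun a b => lip_add4 hf hg a b, fun k hk => (main2 k hk).1⟩
  -- part 1 transitivity via conjugation
  intro k hk
  haveI : NeZero ((2:ℕ)^k) := ⟨pow_ne_zero _ (by norm_num)⟩
  set φ : ℤ_[2] → ℤ_[2] := fun x => x + 4 * g x with hφdef
  have hcomp1 : inducedMod (fun x => f (x + 4 * g x)) k
      = fun z => inducedMod f k (inducedMod φ k z) := comp_inducedMod hf k
  have hφlip : ∀ a b : ℤ_[2], ‖φ a - φ b‖ ≤ ‖a - b‖ := hphi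
  have hcomp2 : inducedMod (fun x => f x + 4 * g (f x)) k
      = fun z => inducedMod φ k (inducedMod f k z) := comp_inducedMod hφlip k
  set Φ : ZMod (2^k) → ZMod (2^k) := inducedMod φ k with hΦdef
  set F : ZMod (2^k) → ZMod (2^k) := inducedMod f k with hFdef
  set Ψ : ZMod (2^k) → ZMod (2^k) := inducedMod (fun x => f x + 4 * g (f x)) k with hΨdef
  have hΨtrans : ∀ z : ZMod (2^k), ∃ n : ℕ, Ψ^[n] 0 = z := (main2' k hk).1
  have hΨbij : Function.Bijective Ψ := (main2' k hk).2
  have hΨper : Ψ^[2^k] 0 = 0 := by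
    have := orbit_period hΨbij hΨtrans
    rwa [ZMod.card] at this
  have hΦinj : Function.Injective Φ := by
    intro a b he
    have hd : ((2^k:ℕ):ℤ_[2]) ∣ φ ((a.val : ℤ_[2])) - φ ((b.val : ℤ_[2])) := by
      rw [← pi_eq_iff_dvd]
      exact he
    have hab : ((2^k:ℕ):ℤ_[2]) ∣ (a.val : ℤ_[2]) - (b.val : ℤ_[2]) :=
      phi_dvd_rev hg k _ _ hd
    have := (pi_eq_iff_dvd k _ _).mpr hab
    rwa [pi_val, pi_val] at this
  have hconj : ∀ n : ℕ, ∀ z : ZMod (2^k),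
      Φ ((inducedMod (fun x => f (x + 4 * g x)) k)^[n] z) = Ψ^[n] (Φ z) := by
    intro n
    induction n with
    | zero => intro z; rfl
    | succ n ih =>
      intro z
      have e1 : (inducedMod (fun x => f (x + 4 * g x)) k)^[n+1] z
          = F (Φ ((inducedMod (fun x => f (x + 4 * g x)) k)^[n] z)) := by
        rw [Function.iterate_succ_apply']
        exact congrFun hcomp1 _
      have e2 : Ψ (Ψ^[n] (Φ z)) = Φ (F (Ψ^[n] (Φ z))) := congrFun hcomp2 _
      rw [e1, Function.iterate_succ_apply', e2, ← ih z]
  intro z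
  obtain ⟨m, hm⟩ := hΨtrans (Φ 0)
  obtain ⟨j, hj⟩ := hΨtrans (Φ z)
  have hmle : m ≤ m * 2^k := Nat.le_mul_of_pos_right m (by positivity)
  refine ⟨j + (m * 2^k - m), ?_⟩
  apply hΦinj
  rw [hconj]
  have hidx : (j + (m * 2^k - m)) + m = j + m * 2^k := by omega
  calc Ψ^[j + (m * 2^k - m)] (Φ 0)
      = Ψ^[j + (m * 2^k - m)] (Ψ^[m] 0) := by rw [hm]
    _ = Ψ^[(j + (m * 2^k - m)) + m] 0 :=
        (Function.iterate_add_apply Ψ (j + (m * 2^k - m)) m 0).symm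
    _ = Ψ^[j + m * 2^k] 0 := by rw [hidx]
    _ = Ψ^[j] (Ψ^[m * 2^k] 0) := Function.iterate_add_apply Ψ j (m * 2^k) 0
    _ = Ψ^[j] 0 := by rw [period_mul hΨper m]
    _ = Φ z := hj
end

section
/- A map f : ℤ_2 → ℤ_2 is a 1-Lipschitz function that is transitive modulo 2^k for every k ≥ 1 (i.e., an ergodic T-function) if and only if there exists a 1-Lipschitz function g : ℤ_2 → ℤ_2 such that f(x) = 1 + x + 2·(g(x+1) − g(x)) for all x ∈ ℤ_2. -/
open PadicInt

namespace Erg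

def Lip (f : ℤ_[2] → ℤ_[2]) : Prop := ∀ a b : ℤ_[2], ‖f a - f b‖ ≤ ‖a - b‖

instance (k : ℕ) : NeZero (2 ^ k) := ⟨pow_ne_zero k (by norm_num)⟩

lemma tz_eq_iff (k : ℕ) (a b : ℤ_[2]) :
    toZModPow k a = toZModPow k b ↔ ‖a - b‖ ≤ (2:ℝ) ^ (-(k:ℤ)) := by
  rw [← sub_eq_zero, ← map_sub, ← RingHom.mem_ker, ker_toZModPow,
    ← PadicInt.norm_le_pow_iff_mem_span_pow (a - b) k (p := 2)]
  norm_num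

lemma Lip.congr {f : ℤ_[2] → ℤ_[2]} (hf : Lip f) {k : ℕ} {a b : ℤ_[2]}
    (h : toZModPow k a = toZModPow k b) : toZModPow k (f a) = toZModPow k (f b) := by
  rw [tz_eq_iff] at h ⊢
  exact le_trans (hf a b) h

lemma tz_natCast (k : ℕ) (z : ZMod (2 ^ k)) :
    toZModPow k ((z.val : ℤ_[2])) = z := by
  rw [map_natCast, ZMod.natCast_zmod_val]

lemma induced_comm {f : ℤ_[2] → ℤ_[2]} (hf : Lip f) (k : ℕ) (x : ℤ_[2]) :
    inducedMod f k (toZModPow k x) = toZModPow k (f x) := by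
  apply hf.congr
  exact tz_natCast k _

lemma induced_iter {f : ℤ_[2] → ℤ_[2]} (hf : Lip f) (k n : ℕ) (x : ℤ_[2]) :
    (inducedMod f k)^[n] (toZModPow k x) = toZModPow k (f^[n] x) := by
  induction n with
  | zero => rfl
  | succ n ih =>
      rw [Function.iterate_succ_apply', ih, Function.iterate_succ_apply', induced_comm hf]

noncomputable def pr (k : ℕ) : ZMod (2 ^ (k + 1)) →+* ZMod (2 ^ k) :=
  ZMod.castHom (pow_dvd_pow 2 (Nat.le_succ k)) _

lemma pr_t (k : ℕ) (x : ℤ_[2]) : pr k (toZModPow (k + 1) x) = toZModPow k x := by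
  rw [pr, ZMod.castHom_apply, cast_toZModPow _ _ (Nat.le_succ k)]

lemma pr_cast (k : ℕ) (z : ZMod (2 ^ (k + 1))) : pr k z = (z.val : ZMod (2 ^ k)) := by
  rw [pr, ZMod.castHom_apply, ← ZMod.natCast_val]

lemma t_val_pr (k : ℕ) (z : ZMod (2 ^ (k + 1))) :
    toZModPow k ((z.val : ℤ_[2])) = pr k z := by
  rw [map_natCast, pr_cast]

lemma pr_induced {f : ℤ_[2] → ℤ_[2]} (hf : Lip f) (k : ℕ) (z : ZMod (2 ^ (k + 1))) :
    pr k (inducedMod f (k + 1) z) = inducedMod f k (pr k z) := by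
  show pr k (toZModPow (k+1) (f _)) = toZModPow k (f _)
  rw [pr_t]
  apply hf.congr
  rw [t_val_pr, tz_natCast]

lemma pr_eq_zero_iff (k : ℕ) (z : ZMod (2 ^ (k + 1))) :
    pr k z = 0 ↔ z = 0 ∨ z = ((2 ^ k : ℕ) : ZMod (2 ^ (k + 1))) := by
  constructor
  · intro h
    rw [pr_cast, ZMod.natCast_eq_zero_iff] at h
    obtain ⟨c, hc⟩ := h
    have hv : z.val < 2 ^ (k + 1) := ZMod.val_lt z
    rw [hc] at hv
    have hc2 : c < 2 := by
      by_contra hh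
      push_neg at hh
      have : 2 ^ k * 2 ≤ 2 ^ k * c := Nat.mul_le_mul_left _ hh
      omega
    interval_cases c
    · left
      have : z.val = 0 := by omega
      rw [← ZMod.natCast_zmod_val z, this, Nat.cast_zero]
    · right
      rw [← ZMod.natCast_zmod_val z, hc]
      norm_num
  · rintro (rfl | rfl)
    · exact map_zero _
    · rw [map_natCast, ZMod.natCast_eq_zero_iff]

lemma two_pow_ne_zero_zmod (k : ℕ) : ((2 ^ k : ℕ) : ZMod (2 ^ (k + 1))) ≠ 0 := by
  rw [Ne, ZMod.natCast_eq_zero_iff]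
  intro h
  have := Nat.le_of_dvd (by positivity) h
  have : (2:ℕ) ^ k < 2 ^ (k+1) := Nat.pow_lt_pow_right (by norm_num) (Nat.lt_succ_self k)
  omega

lemma pr_iter {f : ℤ_[2] → ℤ_[2]} (hf : Lip f) (k n : ℕ) (z : ZMod (2 ^ (k + 1))) :
    pr k ((inducedMod f (k + 1))^[n] z) = (inducedMod f k)^[n] (pr k z) := by
  induction n with
  | zero => rfl
  | succ n ih => rw [Function.iterate_succ_apply', Function.iterate_succ_apply',
      pr_induced hf, ih]

section Orbit

variable {f : ℤ_[2] → ℤ_[2]} (hf : Lip f) (hT : ∀ k : ℕ, TransitiveMod f k)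

include hf hT

lemma exists_return (k : ℕ) : ∃ n, 1 ≤ n ∧ (inducedMod f k)^[n] 0 = 0 := by
  obtain ⟨n, hn⟩ := hT (k + 1) ((2 ^ k : ℕ) : ZMod (2 ^ (k + 1)))
  refine ⟨n, ?_, ?_⟩
  · rcases Nat.eq_zero_or_pos n with rfl | h
    · exact absurd hn.symm (two_pow_ne_zero_zmod k)
    · exact h
  · have := congrArg (pr k) hn
    rw [pr_iter hf, map_zero, map_natCast, ZMod.natCast_self] at this
    exact this

open Classical in
noncomputable def period (k : ℕ) : ℕ := Nat.find (exists_return hf hT k)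

lemma period_pos (k : ℕ) : 1 ≤ period hf hT k := (Nat.find_spec (exists_return hf hT k)).1

lemma period_ret (k : ℕ) : (inducedMod f k)^[period hf hT k] 0 = 0 :=
  (Nat.find_spec (exists_return hf hT k)).2

lemma period_min {k n : ℕ} (h1 : 1 ≤ n) (h2 : n < period hf hT k) :
    (inducedMod f k)^[n] 0 ≠ 0 := fun hc =>
  Nat.find_min (exists_return hf hT k) h2 ⟨h1, hc⟩

lemma iter_mul_add (k q r : ℕ) :
    (inducedMod f k)^[period hf hT k * q + r] 0 = (inducedMod f k)^[r] 0 := by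
  induction q with
  | zero => simp
  | succ q ih =>
      have : period hf hT k * (q + 1) + r = (period hf hT k * q + r) + period hf hT k := by ring
      rw [this, Function.iterate_add_apply, period_ret hf hT, ih]

lemma cover_lt (k : ℕ) (z : ZMod (2 ^ k)) :
    ∃ n, n < period hf hT k ∧ (inducedMod f k)^[n] 0 = z := by
  obtain ⟨n, hn⟩ := hT k z
  refine ⟨n % period hf hT k, Nat.mod_lt _ (period_pos hf hT k), ?_⟩
  have h2 := iter_mul_add hf hT k (n / period hf hT k) (n % period hf hT k)
  rw [Nat.div_add_mod] at h2
  rw [← hn, ← h2]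

lemma orbit_inj {k : ℕ} {i j : ℕ} (hi : i < period hf hT k) (hj : j < period hf hT k)
    (h : (inducedMod f k)^[i] 0 = (inducedMod f k)^[j] 0) : i = j := by
  -- wlog
  rcases Nat.lt_trichotomy i j with hij | rfl | hij
  · exfalso
    have key : (inducedMod f k)^[(period hf hT k - j) + i] 0 = 0 := by
      have : (inducedMod f k)^[(period hf hT k - j) + j] 0 = 0 := by
        rw [Nat.sub_add_cancel hj.le]; exact period_ret hf hT k
      rw [Function.iterate_add_apply] at this ⊢
      rw [h]; exact this
    exact period_min hf hT (by omega) (by omega) key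
  · rfl
  · exfalso
    have key : (inducedMod f k)^[(period hf hT k - i) + j] 0 = 0 := by
      have : (inducedMod f k)^[(period hf hT k - i) + i] 0 = 0 := by
        rw [Nat.sub_add_cancel hi.le]; exact period_ret hf hT k
      rw [Function.iterate_add_apply] at this ⊢
      rw [← h]; exact this
    exact period_min hf hT (by omega) (by omega) key

lemma period_eq (k : ℕ) : period hf hT k = 2 ^ k := by
  have hinj : Set.InjOn (fun n => (inducedMod f k)^[n] 0) (Finset.range (period hf hT k)) := by
    intro i hi j hj hij
    simp only [Finset.coe_range, Set.mem_Iio] at hi hj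
    exact orbit_inj hf hT hi hj hij
  have himg : (Finset.range (period hf hT k)).image (fun n => (inducedMod f k)^[n] 0)
      = Finset.univ := by
    apply Finset.eq_univ_of_forall
    intro z
    obtain ⟨n, hn, he⟩ := cover_lt hf hT k z
    exact Finset.mem_image.2 ⟨n, Finset.mem_range.2 hn, he⟩
  have := Finset.card_image_of_injOn hinj
  rw [himg, Finset.card_univ, ZMod.card, Finset.card_range] at this
  omega

end Orbit

section Orbit2

variable {f : ℤ_[2] → ℤ_[2]} (hf : Lip f) (hT : ∀ k : ℕ, TransitiveMod f k)

include hf hT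

lemma ret_pow (k : ℕ) : (inducedMod f k)^[2 ^ k] 0 = 0 := by
  have := period_ret hf hT k; rwa [period_eq hf hT] at this

lemma min_pow {k n : ℕ} (h1 : 1 ≤ n) (h2 : n < 2 ^ k) : (inducedMod f k)^[n] 0 ≠ 0 := by
  apply period_min hf hT h1; rwa [period_eq hf hT]

lemma cover_pow (k : ℕ) (z : ZMod (2 ^ k)) :
    ∃ n, n < 2 ^ k ∧ (inducedMod f k)^[n] 0 = z := by
  have := cover_lt hf hT k z; rwa [period_eq hf hT] at this

lemma induced_surj (k : ℕ) : Function.Surjective (inducedMod f k) := by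
  intro z
  obtain ⟨n, hn, he⟩ := cover_pow hf hT k z
  cases n with
  | zero =>
      refine ⟨(inducedMod f k)^[2 ^ k - 1] 0, ?_⟩
      have : (inducedMod f k)^[2 ^ k] 0 = z := by rw [ret_pow hf hT k, ← he]; rfl
      rw [← this]
      rw [← Function.iterate_succ_apply' (inducedMod f k) (2 ^ k - 1) 0]
      congr 1
      have : 1 ≤ 2 ^ k := Nat.one_le_two_pow
      omega
  | succ n =>
      exact ⟨(inducedMod f k)^[n] 0, by rw [← Function.iterate_succ_apply' (inducedMod f k) n 0]; exact he⟩

lemma induced_inj (k : ℕ) : Function.Injective (inducedMod f k) :=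
  Finite.injective_iff_surjective.2 (induced_surj hf hT k)

lemma halfstep (k : ℕ) :
    toZModPow (k + 1) (f^[2 ^ k] 0) = ((2 ^ k : ℕ) : ZMod (2 ^ (k + 1))) := by
  have h0 : (inducedMod f (k+1))^[2 ^ k] 0 = toZModPow (k+1) (f^[2 ^ k] 0) := by
    have := induced_iter hf (k+1) (2 ^ k) 0
    rwa [map_zero] at this
  set z := (inducedMod f (k+1))^[2 ^ k] 0 with hz
  have hpr : pr k z = 0 := by
    rw [hz, pr_iter hf, map_zero, ret_pow hf hT k]
  have hne : z ≠ 0 := min_pow hf hT Nat.one_le_two_pow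
    (Nat.pow_lt_pow_right (by norm_num) (Nat.lt_succ_self k))
  rcases (pr_eq_zero_iff k z).1 hpr with h | h
  · exact absurd h hne
  · rw [← h0, h]

lemma parity (x : ℤ_[2]) : toZModPow 1 (f x) = toZModPow 1 x + 1 := by
  have key : ∀ w : ZMod (2 ^ 1), inducedMod f 1 w = w + 1 := by
    have h1 : inducedMod f 1 0 = 1 := by
      have hne := min_pow hf hT (k := 1) (n := 1) le_rfl (by norm_num)
      have : (inducedMod f 1)^[1] 0 = inducedMod f 1 0 := rfl
      rw [this] at hne
      have hw : ∀ w : ZMod (2 ^ 1), w ≠ 0 → w = 1 := by decide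
      exact hw _ hne
    have h2 : inducedMod f 1 1 = 0 := by
      have := ret_pow hf hT 1
      have e : (inducedMod f 1)^[2 ^ 1] 0 = inducedMod f 1 (inducedMod f 1 0) := rfl
      rw [e, h1] at this
      exact this
    intro w
    have : w = 0 ∨ w = 1 := by revert w; decide
    rcases this with rfl | rfl
    · rw [h1]; decide
    · rw [h2]; decide
  rw [← induced_comm hf, key]

lemma sub_mem_two (x : ℤ_[2]) : ∃ c : ℤ_[2], f x - x - 1 = 2 * c := by
  have h : toZModPow 1 (f x - x - 1) = 0 := by
    rw [map_sub, map_sub, map_one, parity hf hT]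
    ring
  have hm : f x - x - 1 ∈ RingHom.ker (toZModPow (p := 2) 1) := RingHom.mem_ker.2 h
  rw [ker_toZModPow, Ideal.mem_span_singleton] at hm
  obtain ⟨c, hc⟩ := hm
  exact ⟨c, by rw [hc]; push_cast; ring⟩

noncomputable def cfun (x : ℤ_[2]) : ℤ_[2] := (sub_mem_two hf hT x).choose

lemma cfun_spec (x : ℤ_[2]) : f x = 1 + x + 2 * cfun hf hT x := by
  have := (sub_mem_two hf hT x).choose_spec
  rw [show (sub_mem_two hf hT x).choose = cfun hf hT x from rfl] at this
  linear_combination this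

end Orbit2

lemma two_mul_congr {k : ℕ} {a b : ℤ_[2]} 
    (h : toZModPow (k + 1) (2 * a) = toZModPow (k + 1) (2 * b)) :
    toZModPow k a = toZModPow k b := by
  rw [tz_eq_iff] at h ⊢
  have h2 : (2 * a) - (2 * b) = 2 * (a - b) := by ring
  rw [h2] at h
  have hn2 : ‖(2:ℤ_[2])‖ = 2⁻¹ := by
    rw [show ((2:ℤ_[2])) = ((2:ℕ):ℤ_[2]) by norm_num, @PadicInt.norm_p 2 _]
    norm_num
  rw [norm_mul, hn2] at h
  have hpow : (2:ℝ) ^ (-((k:ℕ)+1:ℕ):ℤ) = 2⁻¹ * 2 ^ (-(k:ℤ)) := by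
    rw [← zpow_neg_one, ← zpow_add₀ (by norm_num : (2:ℝ) ≠ 0)]
    congr 1
    push_cast
    ring
  rw [hpow] at h
  have := (mul_le_mul_iff_of_pos_left (by norm_num : (0:ℝ) < 2⁻¹)).1 h
  exact this

section CLip

variable {f : ℤ_[2] → ℤ_[2]} (hf : Lip f) (hT : ∀ k : ℕ, TransitiveMod f k)

include hf hT

lemma cfun_lip {k : ℕ} {x y : ℤ_[2]} (h : toZModPow k x = toZModPow k y) :
    toZModPow k (cfun hf hT x) = toZModPow k (cfun hf hT y) := by
  apply two_mul_congr
  have hx : 2 * cfun hf hT x = f x - x - 1 := by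
    have := cfun_spec hf hT x; linear_combination -this
  have hy : 2 * cfun hf hT y = f y - y - 1 := by
    have := cfun_spec hf hT y; linear_combination -this
  rw [hx, hy, map_sub, map_sub, map_sub, map_sub]
  set a := toZModPow (k+1) x with ha
  set b := toZModPow (k+1) y with hb
  have hco : toZModPow (k+1) (f x) = inducedMod f (k+1) a := (induced_comm hf (k+1) x).symm
  have hco' : toZModPow (k+1) (f y) = inducedMod f (k+1) b := (induced_comm hf (k+1) y).symm
  rw [hco, hco']
  -- key claim: inducedMod f (k+1) b - inducedMod f (k+1) a = b - a
  have hpr : pr k a = pr k b := by rw [ha, hb, pr_t, pr_t, h]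
  have h1 : pr k (b - a) = 0 := by rw [map_sub, hpr, sub_self]
  have h2 : pr k (inducedMod f (k+1) b - inducedMod f (k+1) a) = 0 := by
    rw [map_sub, pr_induced hf, pr_induced hf, hpr, sub_self]
  have hiff : b - a = 0 ↔ inducedMod f (k+1) b - inducedMod f (k+1) a = 0 := by
    rw [sub_eq_zero, sub_eq_zero]
    constructor
    · intro hh; rw [hh]
    · intro hh; exact induced_inj hf hT (k+1) hh
  have key : inducedMod f (k+1) b - inducedMod f (k+1) a = b - a := by
    rcases (pr_eq_zero_iff k _).1 h1 with e1 | e1 <;>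
      rcases (pr_eq_zero_iff k _).1 h2 with e2 | e2
    · rw [e1, e2]
    · exact absurd (hiff.1 e1) (by rw [e2]; exact two_pow_ne_zero_zmod k)
    · exact absurd (hiff.2 e2) (by rw [e1]; exact two_pow_ne_zero_zmod k)
    · rw [e1, e2]
  linear_combination -key

-- telescoping
omit hf hT in
lemma iter_telescope (N : ℕ) (x : ℤ_[2]) :
    f^[N] x - x = ∑ j ∈ Finset.range N, (f (f^[j] x) - f^[j] x) := by
  have h1 : ∑ j ∈ Finset.range N, (f (f^[j] x) - f^[j] x)
      = ∑ j ∈ Finset.range N, (f^[j+1] x - f^[j] x) :=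
    Finset.sum_congr rfl (fun j _ => by rw [Function.iterate_succ_apply'])
  rw [h1, Finset.sum_range_sub (fun j => f^[j] x) N]
  simp


lemma iter_eq_sum (N : ℕ) (x : ℤ_[2]) :
    f^[N] x - x = (N : ℤ_[2]) + 2 * ∑ j ∈ Finset.range N, cfun hf hT (f^[j] x) := by
  rw [iter_telescope N x]
  have : ∀ j, f (f^[j] x) - f^[j] x = 1 + 2 * cfun hf hT (f^[j] x) := by
    intro j
    have := cfun_spec hf hT (f^[j] x)
    linear_combination this
  rw [Finset.sum_congr rfl (fun j _ => this j), Finset.sum_add_distrib,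
    Finset.sum_const, Finset.card_range, Finset.mul_sum]
  ring

end CLip

lemma sum_univ_zmod_shift {M : Type*} [AddCommMonoid M] (k M0 : ℕ) (φ : ZMod (2 ^ k) → M) :
    ∑ z : ZMod (2 ^ k), φ z = ∑ i ∈ Finset.range (2 ^ k), φ (((M0 + i : ℕ) : ZMod (2 ^ k))) := by
  rw [← Finset.sum_image (g := fun i : ℕ => ((M0 + i : ℕ) : ZMod (2 ^ k)))
    (f := φ) ?_]
  · congr 1
    symm
    apply Finset.eq_univ_of_card
    rw [Finset.card_image_of_injOn, Finset.card_range, ZMod.card]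
    intro i hi j hj hij
    simp only [Finset.coe_range, Set.mem_Iio] at hi hj
    have : ((i : ℕ) : ZMod (2 ^ k)) = ((j : ℕ) : ZMod (2 ^ k)) := by
      push_cast at hij
      exact add_left_cancel hij
    have := congrArg ZMod.val this
    rwa [ZMod.val_cast_of_lt hi, ZMod.val_cast_of_lt hj] at this
  · intro i hi j hj hij
    simp only [Finset.coe_range, Set.mem_Iio] at hi hj
    have : ((i : ℕ) : ZMod (2 ^ k)) = ((j : ℕ) : ZMod (2 ^ k)) := by
      push_cast at hij
      exact add_left_cancel hij
    have := congrArg ZMod.val this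
    rwa [ZMod.val_cast_of_lt hi, ZMod.val_cast_of_lt hj] at this

section Sums

variable {f : ℤ_[2] → ℤ_[2]} (hf : Lip f) (hT : ∀ k : ℕ, TransitiveMod f k)

include hf hT

lemma sum_univ_orbit {M : Type*} [AddCommMonoid M] (k : ℕ) (φ : ZMod (2 ^ k) → M) :
    ∑ z : ZMod (2 ^ k), φ z = ∑ j ∈ Finset.range (2 ^ k), φ ((inducedMod f k)^[j] 0) := by
  rw [← Finset.sum_image (g := fun j : ℕ => (inducedMod f k)^[j] 0) (f := φ) ?_]
  · congr 1
    symm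
    apply Finset.eq_univ_of_forall
    intro z
    obtain ⟨n, hn, he⟩ := cover_pow hf hT k z
    exact Finset.mem_image.2 ⟨n, Finset.mem_range.2 hn, he⟩
  · intro i hi j hj hij
    simp only [Finset.coe_range, Set.mem_Iio] at hi hj
    have hp := period_eq hf hT k
    exact orbit_inj hf hT (by omega) (by omega) hij

noncomputable def phi (k : ℕ) : ZMod (2 ^ k) → ZMod (2 ^ k) :=
  fun z => toZModPow k (cfun hf hT ((z.val : ℤ_[2])))

lemma phi_eq (k : ℕ) (x : ℤ_[2]) :
    toZModPow k (cfun hf hT x) = phi hf hT k (toZModPow k x) :=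
  cfun_lip hf hT (tz_natCast k _).symm

lemma sum_phi_zero (k : ℕ) : ∑ z : ZMod (2 ^ k), phi hf hT k z = 0 := by
  set S := ∑ j ∈ Finset.range (2 ^ k), cfun hf hT (f^[j] 0) with hS
  have e1 : f^[2 ^ k] 0 - 0 = ((2 ^ k : ℕ) : ℤ_[2]) + 2 * S := iter_eq_sum hf hT (2 ^ k) 0
  have e2 : toZModPow (k + 1) (2 * S) = toZModPow (k + 1) (2 * 0) := by
    have := congrArg (toZModPow (k + 1)) e1
    rw [map_sub, map_zero, sub_zero, halfstep hf hT k, map_add, map_natCast] at this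
    have h0 : toZModPow (k + 1) (2 * S) = 0 := by
      have h' := this
      rw [left_eq_add] at h'
      exact h'
    rw [h0, mul_zero, map_zero]
  have e3 : toZModPow k S = 0 := by
    rw [two_mul_congr e2, map_zero]
  have e4 : toZModPow k S = ∑ z : ZMod (2 ^ k), phi hf hT k z := by
    rw [hS, map_sum, sum_univ_orbit hf hT k (phi hf hT k)]
    apply Finset.sum_congr rfl
    intro j _
    rw [phi_eq hf hT k]
    congr 1
    rw [← induced_iter hf k j 0, map_zero]
  rw [← e4, e3]

lemma window (k M0 : ℕ) :
    toZModPow k (∑ i ∈ Finset.range (2 ^ k), cfun hf hT (((M0 + i : ℕ) : ℤ_[2]))) = 0 := by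
  rw [map_sum]
  have : ∀ i, toZModPow k (cfun hf hT (((M0 + i : ℕ) : ℤ_[2])))
      = phi hf hT k (((M0 + i : ℕ) : ZMod (2 ^ k))) := by
    intro i
    rw [phi_eq hf hT k, map_natCast]
  rw [Finset.sum_congr rfl (fun i _ => this i), ← sum_univ_zmod_shift k M0 (phi hf hT k),
    sum_phi_zero hf hT k]

noncomputable def g0 (n : ℕ) : ℤ_[2] := ∑ i ∈ Finset.range n, cfun hf hT ((i : ℤ_[2]))

lemma g0_add (a u : ℕ) :
    g0 hf hT (a + u) = g0 hf hT a + ∑ i ∈ Finset.range u, cfun hf hT (((a + i : ℕ) : ℤ_[2])) := by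
  induction u with
  | zero => simp [g0]
  | succ u ih =>
      have : a + (u + 1) = (a + u) + 1 := by omega
      rw [this, g0, Finset.sum_range_succ, ← g0, ih, Finset.sum_range_succ]
      ring

lemma g0_lip_step (k a t : ℕ) :
    toZModPow k (g0 hf hT (a + 2 ^ k * t)) = toZModPow k (g0 hf hT a) := by
  induction t with
  | zero => simp
  | succ t ih =>
      have : a + 2 ^ k * (t + 1) = (a + 2 ^ k * t) + 2 ^ k := by ring
      rw [this, g0_add hf hT, map_add, window hf hT, add_zero, ih]

lemma g0_lip {k a b : ℕ} (h : (a : ZMod (2 ^ k)) = b) :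
    toZModPow k (g0 hf hT a) = toZModPow k (g0 hf hT b) := by
  have key : ∀ a b : ℕ, a ≤ b → (a : ZMod (2 ^ k)) = b →
      toZModPow k (g0 hf hT a) = toZModPow k (g0 hf hT b) := by
    intro a b hab h
    rw [ZMod.natCast_eq_natCast_iff] at h
    obtain ⟨t, ht⟩ := (Nat.modEq_iff_dvd' hab).1 h
    have : b = a + 2 ^ k * t := by omega
    rw [this, g0_lip_step hf hT]
  rcases le_total a b with hab | hab
  · exact key a b hab h
  · exact (key b a hab h.symm).symm

end Sums

lemma pow_half_eq (k : ℕ) : (2:ℝ) ^ (-(k:ℤ)) = (1/2:ℝ) ^ k := by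
  rw [zpow_neg, zpow_natCast, one_div, inv_pow]

lemma tz_all_eq {a b : ℤ_[2]} (h : ∀ k : ℕ, toZModPow k a = toZModPow k b) : a = b := by
  have h1 : ∀ k : ℕ, ‖a - b‖ ≤ (1/2:ℝ) ^ k := by
    intro k
    have := (tz_eq_iff k a b).1 (h k)
    calc ‖a - b‖ ≤ (2:ℝ) ^ (-(k:ℤ)) := this
      _ = (1/2:ℝ) ^ k := pow_half_eq k
  have h0 : Filter.Tendsto (fun k : ℕ => (1/2:ℝ) ^ k) Filter.atTop (nhds 0) :=
    tendsto_pow_atTop_nhds_zero_of_lt_one (by norm_num) (by norm_num)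
  have : ‖a - b‖ ≤ 0 := ge_of_tendsto' h0 h1
  have : a - b = 0 := by
    rw [← norm_le_zero_iff]
    exact this
  exact sub_eq_zero.1 this

section Glim

variable {f : ℤ_[2] → ℤ_[2]} (hf : Lip f) (hT : ∀ k : ℕ, TransitiveMod f k)

noncomputable def rrep (k : ℕ) (x : ℤ_[2]) : ℕ := (toZModPow k x).val

include hf hT

omit hf hT in
lemma t_rrep {k l : ℕ} (h : k ≤ l) (x : ℤ_[2]) :
    toZModPow k ((rrep l x : ℤ_[2])) = toZModPow k x := by
  rw [← cast_toZModPow k l h x, ← cast_toZModPow k l h ((rrep l x : ℤ_[2])), rrep, tz_natCast]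

lemma u_congr {k l : ℕ} (h : k ≤ l) (x : ℤ_[2]) :
    toZModPow k (g0 hf hT (rrep l x)) = toZModPow k (g0 hf hT (rrep k x)) := by
  apply g0_lip hf hT
  have e1 : ((rrep l x : ℕ) : ZMod (2 ^ k)) = toZModPow k ((rrep l x : ℤ_[2])) :=
    (map_natCast _ _).symm
  have e2 : ((rrep k x : ℕ) : ZMod (2 ^ k)) = toZModPow k ((rrep k x : ℤ_[2])) :=
    (map_natCast _ _).symm
  rw [e1, e2, t_rrep h x, t_rrep le_rfl x]

lemma exists_glim (x : ℤ_[2]) :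
    ∃ a : ℤ_[2], Filter.Tendsto (fun k => g0 hf hT (rrep k x)) Filter.atTop (nhds a) := by
  apply cauchySeq_tendsto_of_complete
  apply cauchySeq_of_le_geometric (1/2 : ℝ) 1 (by norm_num)
  intro n
  rw [dist_eq_norm, one_mul]
  have := (tz_eq_iff n _ _).1 (u_congr hf hT (Nat.le_succ n) x)
  calc ‖g0 hf hT (rrep n x) - g0 hf hT (rrep (n+1) x)‖
      = ‖g0 hf hT (rrep (n+1) x) - g0 hf hT (rrep n x)‖ := by rw [norm_sub_rev]
    _ ≤ (2:ℝ) ^ (-(n:ℤ)) := this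
    _ = (1/2:ℝ) ^ n := pow_half_eq n

noncomputable def glim (x : ℤ_[2]) : ℤ_[2] := (exists_glim hf hT x).choose

lemma glim_spec (x : ℤ_[2]) :
    Filter.Tendsto (fun k => g0 hf hT (rrep k x)) Filter.atTop (nhds (glim hf hT x)) :=
  (exists_glim hf hT x).choose_spec

lemma glim_t (k : ℕ) (x : ℤ_[2]) :
    toZModPow k (glim hf hT x) = toZModPow k (g0 hf hT (rrep k x)) := by
  rw [tz_eq_iff]
  have htd : Filter.Tendsto (fun l => ‖g0 hf hT (rrep l x) - g0 hf hT (rrep k x)‖)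
      Filter.atTop (nhds ‖glim hf hT x - g0 hf hT (rrep k x)‖) :=
    ((glim_spec hf hT x).sub tendsto_const_nhds).norm
  apply le_of_tendsto htd
  rw [Filter.eventually_atTop]
  exact ⟨k, fun l hl => (tz_eq_iff k _ _).1 (u_congr hf hT hl x)⟩

lemma glim_congr {k : ℕ} {x y : ℤ_[2]} (h : toZModPow k x = toZModPow k y) :
    toZModPow k (glim hf hT x) = toZModPow k (glim hf hT y) := by
  rw [glim_t hf hT k x, glim_t hf hT k y]
  apply g0_lip hf hT
  have e1 : ((rrep k x : ℕ) : ZMod (2 ^ k)) = toZModPow k x := by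
    rw [← t_rrep le_rfl x, map_natCast]
  have e2 : ((rrep k y : ℕ) : ZMod (2 ^ k)) = toZModPow k y := by
    rw [← t_rrep le_rfl y, map_natCast]
  rw [e1, e2, h]

lemma glim_lip : Lip (glim hf hT) := by
  intro a b
  rcases eq_or_ne a b with rfl | hab
  · simp
  have hsub : a - b ≠ 0 := sub_ne_zero.2 hab
  set n : ℕ := (a - b).valuation with hn
  have hval : ((a - b).valuation) = (n : ℤ) := by
    rw [hn]
  have hnorm : ‖a - b‖ = (2:ℝ) ^ (-(n:ℤ)) := by
    rw [PadicInt.norm_eq_zpow_neg_valuation hsub, hval]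
    norm_num
  have h1 : toZModPow n a = toZModPow n b := by
    rw [tz_eq_iff, ← hnorm]
  have := (tz_eq_iff n _ _).1 (glim_congr hf hT h1)
  rw [hnorm]
  exact this

lemma glim_nat (k n : ℕ) : toZModPow k (glim hf hT ((n : ℤ_[2]))) = toZModPow k (g0 hf hT n) := by
  rw [glim_t hf hT k]
  apply g0_lip hf hT
  have e1 : ((rrep k ((n : ℤ_[2])) : ℕ) : ZMod (2 ^ k)) = toZModPow k ((n : ℤ_[2])) := by
    rw [← t_rrep le_rfl ((n : ℤ_[2])), map_natCast]
  rw [e1, map_natCast]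

lemma glim_delta (x : ℤ_[2]) : glim hf hT (x + 1) - glim hf hT x = cfun hf hT x := by
  apply tz_all_eq
  intro k
  set n : ℕ := rrep k x with hn
  have htx : toZModPow k ((n : ℤ_[2])) = toZModPow k x := t_rrep le_rfl x
  have hx1 : toZModPow k (x + 1) = toZModPow k (((n + 1 : ℕ) : ℤ_[2])) := by
    rw [map_add, map_one, ← htx]
    push_cast
    rw [map_add, map_one]
  have e1 : toZModPow k (glim hf hT (x + 1)) = toZModPow k (g0 hf hT (n + 1)) := by
    rw [glim_congr hf hT hx1, glim_nat hf hT]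
  have e2 : toZModPow k (glim hf hT x) = toZModPow k (g0 hf hT n) := by
    rw [glim_congr hf hT htx.symm, glim_nat hf hT]
  have e3 : g0 hf hT (n + 1) = g0 hf hT n + cfun hf hT ((n : ℤ_[2])) := by
    rw [g0, Finset.sum_range_succ, ← g0]
  rw [map_sub, e1, e2, e3, map_add]
  have e4 : toZModPow k (cfun hf hT ((n : ℤ_[2]))) = toZModPow k (cfun hf hT x) :=
    cfun_lip hf hT htx
  rw [e4]
  ring

lemma forward_dir :
    ∃ g : ℤ_[2] → ℤ_[2], (∀ a b : ℤ_[2], ‖g a - g b‖ ≤ ‖a - b‖) ∧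
      ∀ x : ℤ_[2], f x = 1 + x + 2 * (g (x + 1) - g x) := by
  refine ⟨glim hf hT, glim_lip hf hT, fun x => ?_⟩
  rw [glim_delta hf hT x]
  exact cfun_spec hf hT x

end Glim

lemma two_mul_congr_rev {k : ℕ} {a b : ℤ_[2]} (h : toZModPow k a = toZModPow k b) :
    toZModPow (k + 1) (2 * a) = toZModPow (k + 1) (2 * b) := by
  rw [tz_eq_iff] at h ⊢
  have h2 : (2 * a) - (2 * b) = 2 * (a - b) := by ring
  rw [h2, norm_mul]
  have hn2 : ‖(2:ℤ_[2])‖ = 2⁻¹ := by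
    rw [show ((2:ℤ_[2])) = ((2:ℕ):ℤ_[2]) by norm_num, @PadicInt.norm_p 2 _]
    norm_num
  rw [hn2]
  have hpow : (2:ℝ) ^ (-((k:ℕ)+1:ℕ):ℤ) = 2⁻¹ * 2 ^ (-(k:ℤ)) := by
    rw [← zpow_neg_one, ← zpow_add₀ (by norm_num : (2:ℝ) ≠ 0)]
    congr 1
    push_cast
    ring
  rw [hpow]
  exact mul_le_mul_of_nonneg_left h (by norm_num)

section Reverse

variable {f g : ℤ_[2] → ℤ_[2]} (hg : Lip g)
  (hfg : ∀ x : ℤ_[2], f x = 1 + x + 2 * (g (x + 1) - g x))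

include hg hfg

lemma rev_lip : Lip f := by
  intro a b
  have e : f a - f b = (a - b) + 2 * (((g (a+1) - g (b+1))) - (g a - g b)) := by
    rw [hfg a, hfg b]; ring
  rw [e]
  apply le_trans (PadicInt.nonarchimedean _ _)
  apply max_le le_rfl
  calc ‖2 * ((g (a+1) - g (b+1)) - (g a - g b))‖
      ≤ ‖(g (a+1) - g (b+1)) - (g a - g b)‖ := by
        rw [norm_mul]
        apply mul_le_of_le_one_left (norm_nonneg _) (PadicInt.norm_le_one _)
    _ ≤ max ‖g (a+1) - g (b+1)‖ ‖g a - g b‖ := by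
        rw [sub_eq_add_neg]
        apply le_trans (PadicInt.nonarchimedean _ _)
        rw [norm_neg]
    _ ≤ ‖a - b‖ := by
        apply max_le
        · have := hg (a+1) (b+1)
          have e2 : (a+1) - (b+1) = a - b := by ring
          rwa [e2] at this
        · exact hg a b

-- statement P j
def PP (f : ℤ_[2] → ℤ_[2]) (j : ℕ) : Prop :=
  ∀ x : ℤ_[2], toZModPow (j+1) (f^[2^j] x) = toZModPow (j+1) (x + ((2^j : ℕ) : ℤ_[2]))

omit hg hfg in
lemma iterstep {j : ℕ} (hPj : PP f j) (x : ℤ_[2]) (s : ℕ) :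
    toZModPow (j+1) (f^[2^j * s] x)
      = toZModPow (j+1) x + ((2^j * s : ℕ) : ZMod (2^(j+1))) := by
  induction s with
  | zero => simp
  | succ s ih =>
      have hn : 2^j * (s+1) = 2^j + 2^j * s := by ring
      rw [hn, Function.iterate_add_apply]
      have := hPj (f^[2^j * s] x)
      rw [this, map_add, ih, map_natCast]
      push_cast
      ring

omit hg hfg in
lemma orbit_cong (m : ℕ) (hP : ∀ j, j < m → PP f j) (x : ℤ_[2]) :
    ∀ n n' : ℕ, toZModPow m (f^[n] x) = toZModPow m (f^[n'] x) →
      (n : ZMod (2^m)) = (n' : ZMod (2^m)) := by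
  induction m with
  | zero =>
      intro n n' _
      haveI : Subsingleton (ZMod (2^0)) := by rw [pow_zero]; infer_instance
      exact Subsingleton.elim _ _
  | succ m ihm =>
      have key : ∀ n n' : ℕ, n ≤ n' →
          toZModPow (m+1) (f^[n] x) = toZModPow (m+1) (f^[n'] x) →
          (n : ZMod (2^(m+1))) = (n' : ZMod (2^(m+1))) := by
        intro n n' hle h
        have hm : toZModPow m (f^[n] x) = toZModPow m (f^[n'] x) := by
          rw [← cast_toZModPow m (m+1) (Nat.le_succ m), ← cast_toZModPow m (m+1) (Nat.le_succ m), h]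
        have hmod : (n : ZMod (2^m)) = (n' : ZMod (2^m)) :=
          ihm (fun j hj => hP j (Nat.lt_succ_of_lt hj)) n n' hm
        rw [ZMod.natCast_eq_natCast_iff] at hmod
        obtain ⟨s, hs⟩ := (Nat.modEq_iff_dvd' hle).1 hmod
        have hn' : n' = n + 2^m * s := by omega
        have hit : toZModPow (m+1) (f^[n'] x)
            = toZModPow (m+1) (f^[n] x) + ((2^m * s : ℕ) : ZMod (2^(m+1))) := by
          rw [hn', add_comm n (2^m * s), Function.iterate_add_apply]
          exact iterstep (hP m (Nat.lt_succ_self m)) (f^[n] x) s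
        rw [h] at hit
        have hz : ((2^m * s : ℕ) : ZMod (2^(m+1))) = 0 := by
          have := hit.symm
          rwa [left_eq_add] at hit
        rw [ZMod.natCast_eq_zero_iff] at hz
        have hdvd : 2 ∣ s := by
          rcases hz with ⟨c, hc⟩
          have h2 : (2:ℕ)^m * s = 2^m * (2 * c) := by rw [hc]; ring
          have hs2 : s = 2 * c := Nat.eq_of_mul_eq_mul_left (by positivity) h2
          exact ⟨c, hs2⟩
        rw [hn', ZMod.natCast_eq_natCast_iff]
        obtain ⟨c, hc⟩ := hdvd
        have : n + 2^m * s = n + 2^(m+1) * c := by rw [hc]; ring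
        rw [this]
        apply Nat.ModEq.symm
        apply Nat.ModEq.add_right_cancel' (0)
        simp [Nat.ModEq]
      intro n n' h
      rcases le_total n n' with hle | hle
      · exact key n n' hle h
      · exact (key n' n hle h.symm).symm

omit hg hfg in
lemma orbit_cover (m : ℕ) (hP : ∀ j, j < m → PP f j) (x : ℤ_[2]) (z : ZMod (2^m)) :
    ∃ n, n < 2^m ∧ toZModPow m (f^[n] x) = z := by
  have hinj : ∀ i ∈ Finset.range (2^m), ∀ j ∈ Finset.range (2^m),
      toZModPow m (f^[i] x) = toZModPow m (f^[j] x) → i = j := by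
    intro i hi j hj hij
    simp only [Finset.mem_range] at hi hj
    have := orbit_cong m hP x i j hij
    have := congrArg ZMod.val this
    rwa [ZMod.val_cast_of_lt hi, ZMod.val_cast_of_lt hj] at this
  have himg : (Finset.range (2^m)).image (fun n => toZModPow m (f^[n] x)) = Finset.univ := by
    apply Finset.eq_univ_of_card
    rw [Finset.card_image_of_injOn (fun i hi j hj => hinj i hi j hj), Finset.card_range, ZMod.card]
  have : z ∈ (Finset.range (2^m)).image (fun n => toZModPow m (f^[n] x)) := by
    rw [himg]; exact Finset.mem_univ z
  obtain ⟨n, hn, he⟩ := Finset.mem_image.1 this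
  exact ⟨n, Finset.mem_range.1 hn, he⟩

omit hg in
lemma iter_eq_sum_g (N : ℕ) (x : ℤ_[2]) :
    f^[N] x - x = (N : ℤ_[2]) + 2 * ∑ j ∈ Finset.range N, (g (f^[j] x + 1) - g (f^[j] x)) := by
  rw [iter_telescope N x]
  have : ∀ j, f (f^[j] x) - f^[j] x = 1 + 2 * (g (f^[j] x + 1) - g (f^[j] x)) := by
    intro j
    have := hfg (f^[j] x)
    linear_combination this
  rw [Finset.sum_congr rfl (fun j _ => this j), Finset.sum_add_distrib,
    Finset.sum_const, Finset.card_range, Finset.mul_sum]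
  ring

lemma main_P : ∀ k, PP f k := by
  intro k
  induction k using Nat.strong_induction_on with
  | _ k ih =>
    cases k with
    | zero =>
        intro x
        have e : f^[2^0] x = f x := by norm_num
        have e2 : ((2^0 : ℕ) : ℤ_[2]) = 1 := by norm_num
        rw [e, e2, hfg x]
        rw [map_add, map_add, map_add, map_one, map_mul]
        have h2 : (toZModPow 1) (2 : ℤ_[2]) = 0 := by
          rw [show ((2:ℤ_[2])) = ((2:ℕ):ℤ_[2]) by norm_num, map_natCast]
          decide
        rw [h2, zero_mul, add_zero]
        ring
    | succ k =>
        intro x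
        set N := 2^(k+1) with hN
        set S := ∑ j ∈ Finset.range N, (g (f^[j] x + 1) - g (f^[j] x)) with hS
        have eq1 : f^[N] x - x = (N : ℤ_[2]) + 2 * S := iter_eq_sum_g hfg N x
        -- t_{k+1} S = t_{k+1} 0
        have hSz : toZModPow (k+1) S = toZModPow (k+1) (0 : ℤ_[2]) := by
          set ψ : ZMod (2^(k+1)) → ZMod (2^(k+1)) :=
            fun z => toZModPow (k+1) (g ((z.val : ℤ_[2]) + 1) - g ((z.val : ℤ_[2]))) with hψ
          have hterm : ∀ j, toZModPow (k+1) (g (f^[j] x + 1) - g (f^[j] x))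
              = ψ (toZModPow (k+1) (f^[j] x)) := by
            intro j
            rw [hψ]
            dsimp only
            rw [map_sub, map_sub]
            have hv : toZModPow (k+1) (((toZModPow (k+1) (f^[j] x)).val : ℤ_[2]))
                = toZModPow (k+1) (f^[j] x) := tz_natCast _ _
            have h1 : toZModPow (k+1) (g (f^[j] x + 1))
                = toZModPow (k+1) (g (((toZModPow (k+1) (f^[j] x)).val : ℤ_[2]) + 1)) := by
              apply hg.congr
              rw [map_add, map_add, hv]
            have h2 : toZModPow (k+1) (g (f^[j] x))
                = toZModPow (k+1) (g (((toZModPow (k+1) (f^[j] x)).val : ℤ_[2]))) :=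
              hg.congr hv.symm
            rw [h1, h2]
          have hcov : ∀ z : ZMod (2^(k+1)), ∃ n, n < 2^(k+1)
              ∧ toZModPow (k+1) (f^[n] x) = z :=
            orbit_cover (k+1) (fun j hj => ih j hj) x
          have hinj : ∀ i ∈ Finset.range (2^(k+1)), ∀ j ∈ Finset.range (2^(k+1)),
              toZModPow (k+1) (f^[i] x) = toZModPow (k+1) (f^[j] x) → i = j := by
            intro i hi j hj hij
            simp only [Finset.mem_range] at hi hj
            have := orbit_cong (k+1) (fun j hj => ih j hj) x i j hij
            have := congrArg ZMod.val this
            rwa [ZMod.val_cast_of_lt hi, ZMod.val_cast_of_lt hj] at this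
          have hreix : ∑ j ∈ Finset.range N, ψ (toZModPow (k+1) (f^[j] x))
              = ∑ z : ZMod (2^(k+1)), ψ z := by
            rw [← Finset.sum_image (g := fun n => toZModPow (k+1) (f^[n] x)) (f := ψ)
              (fun i hi j hj => hinj i hi j hj)]
            congr 1
            apply Finset.eq_univ_of_forall
            intro z
            obtain ⟨n, hn, he⟩ := hcov z
            exact Finset.mem_image.2 ⟨n, Finset.mem_range.2 hn, he⟩
          have hzsum : ∑ z : ZMod (2^(k+1)), ψ z = 0 := by
            rw [sum_univ_zmod_shift (k+1) 0 ψ]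
            have : ∀ i, ψ (((0 + i : ℕ) : ZMod (2^(k+1))))
                = toZModPow (k+1) (g (((i+1 : ℕ) : ℤ_[2])) - g ((i : ℤ_[2]))) := by
              intro i
              rw [hψ]
              dsimp only
              rw [map_sub, map_sub]
              have hv : toZModPow (k+1) (((((0 + i : ℕ) : ZMod (2^(k+1)))).val : ℤ_[2]))
                  = toZModPow (k+1) ((i : ℤ_[2])) := by
                rw [tz_natCast, Nat.zero_add, map_natCast]
              have h1 := hg.congr (k := k+1)
                (a := ((((0 + i : ℕ) : ZMod (2^(k+1)))).val : ℤ_[2]) + 1)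
                (b := ((i+1 : ℕ) : ℤ_[2]))
                (by rw [map_add, hv, map_one, map_natCast, map_natCast]; push_cast; ring)
              have h2 := hg.congr (k := k+1)
                (a := ((((0 + i : ℕ) : ZMod (2^(k+1)))).val : ℤ_[2]))
                (b := ((i : ℕ) : ℤ_[2])) hv
              rw [h1, h2]
            rw [Finset.sum_congr rfl (fun i _ => this i), ← map_sum]
            have htel : ∑ i ∈ Finset.range (2^(k+1)), (g (((i+1 : ℕ) : ℤ_[2])) - g ((i : ℤ_[2])))
                = g ((N : ℤ_[2])) - g ((0 : ℤ_[2])) := by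
              have := Finset.sum_range_sub (fun i => g ((i : ℤ_[2]))) N
              rw [← hN]
              exact this
            rw [htel]
            have : toZModPow (k+1) (g ((N : ℤ_[2]))) = toZModPow (k+1) (g (0 : ℤ_[2])) := by
              apply hg.congr
              rw [map_natCast, map_zero, hN, ZMod.natCast_self]
            rw [map_sub, this, sub_self]
          rw [hS, map_sum, map_zero, Finset.sum_congr rfl (fun j _ => hterm j), hreix, hzsum]
        -- conclude at level k+2
        have h2S : toZModPow (k+2) (2 * S) = 0 := by
          have := two_mul_congr_rev hSz
          rwa [mul_zero, map_zero] at this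
        have := congrArg (toZModPow (k+2)) eq1
        rw [map_sub, map_add, h2S, add_zero] at this
        have : toZModPow (k+2) (f^[N] x) = toZModPow (k+2) x + (N : ZMod (2^(k+2))) := by
          rw [← map_natCast (toZModPow (k+2) : ℤ_[2] →+* ZMod (2^(k+2)))]
          linear_combination this
        rw [map_add, map_natCast]
        exact this

lemma rev_trans (k : ℕ) : TransitiveMod f k := by
  intro z
  obtain ⟨n, _, he⟩ := orbit_cover (f := f) k (fun j _ => main_P hg hfg j) 0 z
  refine ⟨n, ?_⟩
  have := induced_iter (rev_lip hg hfg) k n 0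
  rw [map_zero] at this
  rw [this, he]

end Reverse

end Erg

/-- A map `f : ℤ_2 → ℤ_2` is an ergodic T-function (a 1-Lipschitz function that is transitive
modulo `2^k` for every `k ≥ 1`) if and only if `f x = 1 + x + 2·(g(x+1) − g(x))` for a
suitable 1-Lipschitz function `g : ℤ_2 → ℤ_2`. -/
theorem ergodic_iff_delta_form
    (f : ℤ_[2] → ℤ_[2]) :
    ((∀ a b : ℤ_[2], ‖f a - f b‖ ≤ ‖a - b‖) ∧
        ∀ k : ℕ, 1 ≤ k → TransitiveMod f k) ↔
      ∃ g : ℤ_[2] → ℤ_[2], (∀ a b : ℤ_[2], ‖g a - g b‖ ≤ ‖a - b‖) ∧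
        ∀ x : ℤ_[2], f x = 1 + x + 2 * (g (x + 1) - g x) := by
  constructor
  · rintro ⟨hf, hT1⟩
    have hT : ∀ k : ℕ, TransitiveMod f k := by
      intro k
      cases k with
      | zero =>
          intro z
          haveI : Subsingleton (ZMod (2^0)) := by rw [pow_zero]; infer_instance
          exact ⟨0, Subsingleton.elim _ _⟩
      | succ k => exact hT1 (k+1) (Nat.succ_le_succ (Nat.zero_le k))
    exact Erg.forward_dir hf hT
  · rintro ⟨g, hg, hfg⟩
    exact ⟨Erg.rev_lip hg hfg, fun k _ => Erg.rev_trans hg hfg k⟩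
end

section
/- A map f : ℤ_2 → ℤ_2 is a 1-Lipschitz function that is bijective modulo 2^k for every k ≥ 1 (i.e., a measure-preserving T-function) if and only if there exist d ∈ ℤ_2 and a 1-Lipschitz function g : ℤ_2 → ℤ_2 such that f(x) = d + x + 2·g(x) for all x ∈ ℤ_2. -/
open PadicInt

private lemma pdvd_iff (x : ℤ_[2]) (n : ℕ) :
    (2 : ℤ_[2]) ^ n ∣ x ↔ ‖x‖ ≤ (2 : ℝ) ^ (-n : ℤ) := by
  have h := PadicInt.norm_le_pow_iff_mem_span_pow x n
  rw [Ideal.mem_span_singleton] at h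
  constructor
  · intro hd
    have : ‖x‖ ≤ ((2 : ℕ) : ℝ) ^ (-n : ℤ) := h.mpr (by exact_mod_cast hd)
    simpa using this
  · intro hn
    have : ((2 : ℕ) : ℤ_[2]) ^ n ∣ x := h.mp (by simpa using hn)
    exact_mod_cast this

private lemma tz_zero_iff (k : ℕ) (x : ℤ_[2]) :
    toZModPow k x = 0 ↔ (2 : ℤ_[2]) ^ k ∣ x := by
  rw [← RingHom.mem_ker, PadicInt.ker_toZModPow, Ideal.mem_span_singleton]
  constructor
  · intro h; exact_mod_cast h
  · intro h; exact_mod_cast h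

private lemma tz_eq_iff (k : ℕ) (x y : ℤ_[2]) :
    toZModPow k x = toZModPow k y ↔ (2 : ℤ_[2]) ^ k ∣ x - y := by
  rw [← sub_eq_zero, ← map_sub, tz_zero_iff]

private lemma tz_natval (k : ℕ) (z : ZMod (2 ^ k)) :
    toZModPow k ((z.val : ℤ_[2])) = z := by
  haveI : NeZero (2 ^ k) := ⟨by positivity⟩
  rw [map_natCast]
  exact ZMod.natCast_rightInverse z

private lemma dvd_of_lip (g : ℤ_[2] → ℤ_[2]) (hg : ∀ a b : ℤ_[2], ‖g a - g b‖ ≤ ‖a - b‖) :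
    ∀ (n : ℕ) (a b : ℤ_[2]), (2 : ℤ_[2]) ^ n ∣ a - b → (2 : ℤ_[2]) ^ n ∣ g a - g b := by
  intro n a b h
  rw [pdvd_iff] at h ⊢
  exact (hg a b).trans h

private lemma norm_le_of_dvd_imp (x y : ℤ_[2]) (hx : x ≠ 0)
    (h : ∀ n : ℕ, (2 : ℤ_[2]) ^ n ∣ x → (2 : ℤ_[2]) ^ n ∣ y) : ‖y‖ ≤ ‖x‖ := by
  have hval : ‖x‖ = (2 : ℝ) ^ (-(x.valuation : ℤ)) := by
    have := PadicInt.norm_eq_zpow_neg_valuation (p := 2) hx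
    simpa using this
  set n := (x.valuation : ℤ).toNat with hn
  have hnv : (n : ℤ) = x.valuation := Int.toNat_of_nonneg (Int.natCast_nonneg _)
  have hxd : (2 : ℤ_[2]) ^ n ∣ x := by
    rw [pdvd_iff, hval, hnv]
  have := (pdvd_iff y n).mp (h n hxd)
  rw [hval, ← hnv]
  exact this

private lemma comm_lemma (f : ℤ_[2] → ℤ_[2])
    (hf : ∀ a b : ℤ_[2], ‖f a - f b‖ ≤ ‖a - b‖) (k : ℕ) (a : ℤ_[2]) :
    inducedMod f k (toZModPow k a) = toZModPow k (f a) := by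
  unfold inducedMod
  rw [tz_eq_iff]
  apply dvd_of_lip f hf
  rw [← tz_eq_iff]
  exact tz_natval k (toZModPow k a)

/-- A map `f : ℤ_2 → ℤ_2` is a measure-preserving T-function (a 1-Lipschitz function that is
bijective modulo `2^k` for every `k ≥ 1`) if and only if `f x = d + x + 2·g(x)` for a suitable
`d ∈ ℤ_2` and a suitable 1-Lipschitz function `g : ℤ_2 → ℤ_2`. -/
theorem measure_preserving_iff_d_plus_x_plus_2g
    (f : ℤ_[2] → ℤ_[2]) :
    ((∀ a b : ℤ_[2], ‖f a - f b‖ ≤ ‖a - b‖) ∧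
        ∀ k : ℕ, 1 ≤ k → Function.Bijective (inducedMod f k)) ↔
      ∃ (d : ℤ_[2]) (g : ℤ_[2] → ℤ_[2]), (∀ a b : ℤ_[2], ‖g a - g b‖ ≤ ‖a - b‖) ∧
        ∀ x : ℤ_[2], f x = d + x + 2 * g x := by
  have two_ne : (2 : ℤ_[2]) ≠ 0 := by norm_num
  constructor
  · rintro ⟨hlip, hbij⟩
    have hlipd := dvd_of_lip f hlip
    -- injectivity transfer
    have hinj : ∀ k : ℕ, 1 ≤ k → ∀ a b : ℤ_[2],
        (2 : ℤ_[2]) ^ k ∣ f a - f b → (2 : ℤ_[2]) ^ k ∣ a - b := by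
      intro k hk a b h
      rw [← tz_eq_iff] at h ⊢
      apply (hbij k hk).injective
      rw [comm_lemma f hlip, comm_lemma f hlip, h]
    -- key congruence
    have key : ∀ (k : ℕ) (a b : ℤ_[2]), (2 : ℤ_[2]) ^ k ∣ a - b →
        (2 : ℤ_[2]) ^ (k + 1) ∣ (f a - f b) - (a - b) := by
      intro k a b h
      by_cases h1 : (2 : ℤ_[2]) ^ (k + 1) ∣ a - b
      · exact dvd_sub (hlipd (k + 1) a b h1) h1
      · have hf : (2 : ℤ_[2]) ^ k ∣ f a - f b := hlipd k a b h
        have hfn : ¬ (2 : ℤ_[2]) ^ (k + 1) ∣ f a - f b :=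
          fun hc => h1 (hinj (k + 1) (by omega) a b hc)
        obtain ⟨t, ht⟩ := h
        obtain ⟨s, hs⟩ := hf
        have hto : ¬ (2 : ℤ_[2]) ∣ t := by
          rintro ⟨u, hu⟩
          exact h1 ⟨u, by rw [ht, hu]; ring⟩
        have hso : ¬ (2 : ℤ_[2]) ∣ s := by
          rintro ⟨u, hu⟩
          exact hfn ⟨u, by rw [hs, hu]; ring⟩
        have hst : (2 : ℤ_[2]) ∣ s - t := by
          have h2 : ∀ x : ZMod (2 ^ 1), x = 0 ∨ x = 1 := by decide
          have hsz : toZModPow 1 s ≠ 0 := fun hc => hso (by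
            have := (tz_zero_iff 1 s).mp hc; rwa [pow_one] at this)
          have htz : toZModPow 1 t ≠ 0 := fun hc => hto (by
            have := (tz_zero_iff 1 t).mp hc; rwa [pow_one] at this)
          have : toZModPow 1 s = toZModPow 1 t := by
            rcases h2 (toZModPow 1 s) with h | h <;> rcases h2 (toZModPow 1 t) with h' | h' <;>
              simp_all
          have := (tz_eq_iff 1 s t).mp this
          rwa [pow_one] at this
        obtain ⟨u, hu⟩ := hst
        exact ⟨u, by rw [hs, ht, pow_succ]; rw [sub_eq_iff_eq_add] at hu; rw [hu]; ring⟩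
    -- define g
    have two_dvd : ∀ x : ℤ_[2], (2 : ℤ_[2]) ∣ f x - x - f 0 := by
      intro x
      have := key 0 x 0 (by simp)
      simpa using (by
        have h' : (f x - f 0) - (x - 0) = f x - x - f 0 := by ring
        rw [h'] at this; rwa [pow_one] at this)
    set g : ℤ_[2] → ℤ_[2] := fun x => (two_dvd x).choose with hgdef
    have hgspec : ∀ x : ℤ_[2], f x - x - f 0 = 2 * g x := fun x => (two_dvd x).choose_spec
    have h2g : ∀ a b : ℤ_[2], 2 * (g a - g b) = (f a - f b) - (a - b) := by
      intro a b
      have ha := hgspec a; have hb := hgspec b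
      linear_combination hb - ha
    have hgd : ∀ (n : ℕ) (a b : ℤ_[2]), (2 : ℤ_[2]) ^ n ∣ a - b →
        (2 : ℤ_[2]) ^ n ∣ g a - g b := by
      intro n a b h
      have := key n a b h
      rw [← h2g] at this
      rw [pow_succ'] at this
      exact (mul_dvd_mul_iff_left two_ne).mp this
    refine ⟨f 0, g, ?_, ?_⟩
    · intro a b
      by_cases hab : a = b
      · subst hab; simp
      · exact norm_le_of_dvd_imp (a - b) (g a - g b) (sub_ne_zero_of_ne hab)
          (fun n h => hgd n a b h)
    · intro x
      have := hgspec x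
      linear_combination this
  · rintro ⟨d, g, hg, hfx⟩
    have hgd := dvd_of_lip g hg
    have hflip : ∀ a b : ℤ_[2], ‖f a - f b‖ ≤ ‖a - b‖ := by
      intro a b
      have heq : f a - f b = (a - b) + 2 * (g a - g b) := by rw [hfx, hfx]; ring
      rw [heq]
      refine (PadicInt.nonarchimedean _ _).trans (max_le le_rfl ?_)
      calc ‖(2 : ℤ_[2]) * (g a - g b)‖ = ‖(2 : ℤ_[2])‖ * ‖g a - g b‖ := by
            rw [norm_mul]
        _ ≤ 1 * ‖g a - g b‖ := by
            apply mul_le_mul_of_nonneg_right (PadicInt.norm_le_one 2) (norm_nonneg _)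
        _ = ‖g a - g b‖ := one_mul _
        _ ≤ ‖a - b‖ := hg a b
    refine ⟨hflip, ?_⟩
    intro k hk
    haveI : NeZero (2 ^ k) := ⟨by positivity⟩
    rw [← Finite.injective_iff_bijective]
    intro z w h
    set x : ℤ_[2] := (z.val : ℤ_[2]) with hx
    set y : ℤ_[2] := (w.val : ℤ_[2]) with hy
    have hfd : (2 : ℤ_[2]) ^ k ∣ f x - f y := (tz_eq_iff k _ _).mp h
    have claim : ∀ j : ℕ, j ≤ k → (2 : ℤ_[2]) ^ j ∣ x - y := by
      intro j
      induction j with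
      | zero => intro _; simp
      | succ j ih =>
        intro hj
        have hj' : j ≤ k := by omega
        have hgj : (2 : ℤ_[2]) ^ j ∣ g x - g y := hgd j x y (ih hj')
        have hxy : x - y = (f x - f y) - 2 * (g x - g y) := by rw [hfx, hfx]; ring
        rw [hxy]
        apply dvd_sub
        · exact dvd_trans (pow_dvd_pow 2 hj) hfd
        · rw [pow_succ']
          exact mul_dvd_mul_left 2 hgj
    have : toZModPow k x = toZModPow k y := (tz_eq_iff k x y).mpr (claim k le_rfl)
    rw [hx, hy, tz_natval, tz_natval] at this
    exact this
end
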